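/- arXiv:1805.04954 — 9 statements merged into one kernel-verified Lean document; each statement's English description precedes it below -/
import Mathlib

section
/- Let G = (P, X, ≤, ≤*, ◁) be a Gowers space, p ∈ P, and τ a strategy for player II in Kastanas' game K_p. For every at most countable set 𝒮 of states and every r ∈ P, there exists r* ≤ r with the following property: for every state s ∈ 𝒮 and all x, y ∈ X, if there exist u, v ∈ P such that (1) player I can legally continue the play s by the move (x, u), (2) τ(s⌢(x, u)) = (y, v), and (3) v and r* are compatible, then there exist u', v' ∈ P satisfying (1), (2) and (3) and such that moreover r* ≤* v'. -/
open MeasureTheory Filter Topology TopologicalSpace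

/-! ## Basic sequence helpers -/

/-- The list `[x 0, …, x (n-1)]`. -/
def preSeq {X : Type*} (x : ℕ → X) (n : ℕ) : List X := (List.range n).map x

/-- Interleaving of two sequences: `x 0, y 0, x 1, y 1, …`. -/
def itl {X : Type*} (x y : ℕ → X) : ℕ → X := fun k => if k % 2 = 0 then x (k / 2) else y (k / 2)

/-- Outcome produced by a strategy of player II against the moves `f` of player I. -/
def gOut {Q X : Type*} (τ : List Q → X) (f : ℕ → Q) : ℕ → X :=
  fun n => τ ((List.range (n + 1)).map f)

/-! ## Gowers spaces -/

structure GowersSpace (P : Type*) (X : Type*) where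
  le : P → P → Prop
  les : P → P → Prop
  tri : List X → P → Prop
  le_refl : ∀ p, le p p
  le_trans : ∀ p q r, le p q → le q r → le p r
  les_refl : ∀ p, les p p
  les_trans : ∀ p q r, les p q → les q r → les p r
  le_imp_les : ∀ p q, le p q → les p q
  diag : ∀ p q, les p q → ∃ r, le r p ∧ le r q ∧ les p r
  decseq : ∀ f : ℕ → P, (∀ n, le (f (n + 1)) (f n)) → ∃ p, ∀ n, les p (f n)
  ext : ∀ (p : P) (s : List X), ∃ x, tri (s ++ [x]) p
  mono : ∀ (s : List X) (p q : P), tri s p → le p q → tri s q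

namespace GowersSpace

variable {P X : Type*} (G : GowersSpace P X)

/-- `q ⪅ p` : `q ≤ p` and `p ≤* q`. -/
def lap (q p : P) : Prop := G.le q p ∧ G.les p q

/-- Compatibility of two subspaces. -/
def compat (a b : P) : Prop := ∃ r, G.le r a ∧ G.le r b

/-- Player I has a strategy in the asymptotic game `F_p` to reach `Y`. -/
def IStratF (p : P) (Y : Set (ℕ → X)) : Prop :=
  ∃ σ : List X → P, (∀ s, G.lap (σ s) p) ∧
    ∀ x : ℕ → X, (∀ n, G.tri (preSeq x (n + 1)) (σ (preSeq x n))) → x ∈ Y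

/-- Player II has a strategy in Gowers' game `G_p` to reach `Y`. -/
def IIStratG (p : P) (Y : Set (ℕ → X)) : Prop :=
  ∃ τ : List P → X, ∀ f : ℕ → P, (∀ n, G.le (f n) p) →
    (∀ n, G.tri (preSeq (gOut τ f) (n + 1)) (f n)) ∧ gOut τ f ∈ Y

/-! ### Adversarial-type games (`A_p`, `B_p`, Kastanas' game `K_p`).

In all these games, player II first plays `p₀ ∈ P`; then at each turn `i` player I plays
`(x_i, q_i) ∈ X × P` and player II answers `(y_i, p_{i+1}) ∈ X × P`.  The outcome is
`(x_0, y_0, x_1, y_1, …)`. -/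

/-- Moves of player I computed from his strategy `σ` and the moves `p₀`, `g` of player II. -/
def advI (σ : P → List (X × P) → X × P) (p0 : P) (g : ℕ → X × P) (n : ℕ) : X × P :=
  σ p0 ((List.range n).map g)

/-- The sequence `p₀, p₁, p₂, …` of subspaces played by player II, extracted from `p₀` and `g`. -/
def advIIps (p0 : P) (g : ℕ → X × P) : ℕ → P :=
  fun n => Nat.rec (motive := fun _ => P) p0 (fun k _ => (g k).2) n

/-- The outcome when player I follows `σ` and player II plays `p₀`, `g`. -/
def advIOut (σ : P → List (X × P) → X × P) (p0 : P) (g : ℕ → X × P) : ℕ → X :=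
  itl (fun n => (advI σ p0 g n).1) (fun n => (g n).1)

/-- Player I has a strategy in the game `A_p` to reach `Y`. -/
def IStratA (p : P) (Y : Set (ℕ → X)) : Prop :=
  ∃ σ : P → List (X × P) → X × P,
    (∀ p0 g n, G.tri (preSeq (advIOut σ p0 g) (2 * n + 1)) (advIIps p0 g n) ∧
      G.lap (advI σ p0 g n).2 p) ∧
    ∀ p0 g, (∀ n, G.le (advIIps p0 g n) p) →
      (∀ n, G.tri (preSeq (advIOut σ p0 g) (2 * n + 2)) ((advI σ p0 g n).2)) →
      advIOut σ p0 g ∈ Y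

/-- Player I has a strategy in Kastanas' game `K_p` to reach `Y`. -/
def IStratK (p : P) (Y : Set (ℕ → X)) : Prop :=
  ∃ σ : P → List (X × P) → X × P,
    (∀ p0 g n, G.tri (preSeq (advIOut σ p0 g) (2 * n + 1)) (advIIps p0 g n) ∧
      G.le (advI σ p0 g n).2 (advIIps p0 g n)) ∧
    ∀ p0 g, G.le p0 p →
      (∀ n, G.tri (preSeq (advIOut σ p0 g) (2 * n + 2)) ((advI σ p0 g n).2) ∧
        G.le (advIIps p0 g (n + 1)) ((advI σ p0 g n).2)) →
      advIOut σ p0 g ∈ Y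

/-- Moves of player II computed from her strategy `τ` and the moves `h` of player I:
`advII τ h n = (y_n, p_{n+1})`. -/
def advII (τ : List (X × P) → X × P) (h : ℕ → X × P) (n : ℕ) : X × P :=
  τ ((List.range (n + 1)).map h)

/-- The sequence `p₀, p₁, …` played by player II following the strategy `(p₀, τ)`. -/
def advIIpsB (p0 : P) (τ : List (X × P) → X × P) (h : ℕ → X × P) : ℕ → P :=
  fun n => Nat.rec (motive := fun _ => P) p0 (fun k _ => (advII τ h k).2) n

/-- The outcome when player II follows `τ` and player I plays `h`. -/
def advIIOut (τ : List (X × P) → X × P) (h : ℕ → X × P) : ℕ → X :=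
  itl (fun n => (h n).1) (fun n => (advII τ h n).1)

/-- Player II has a strategy in the game `B_p` to reach `Y`. -/
def IIStratB (p : P) (Y : Set (ℕ → X)) : Prop :=
  ∃ (p0 : P) (τ : List (X × P) → X × P), G.lap p0 p ∧
    (∀ h n, G.tri (preSeq (advIIOut τ h) (2 * n + 2)) ((h n).2) ∧
      G.lap (advIIpsB p0 τ h (n + 1)) p) ∧
    ∀ h : ℕ → X × P,
      (∀ n, G.tri (preSeq (advIIOut τ h) (2 * n + 1)) (advIIpsB p0 τ h n) ∧ G.le ((h n).2) p) →
      advIIOut τ h ∈ Y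

/-- Player II has a strategy in Kastanas' game `K_p` to reach `Y`. -/
def IIStratK (p : P) (Y : Set (ℕ → X)) : Prop :=
  ∃ (p0 : P) (τ : List (X × P) → X × P), G.le p0 p ∧
    (∀ h n, G.tri (preSeq (advIIOut τ h) (2 * n + 2)) ((h n).2) ∧
      G.le (advIIpsB p0 τ h (n + 1)) ((h n).2)) ∧
    ∀ h : ℕ → X × P,
      (∀ n, G.tri (preSeq (advIIOut τ h) (2 * n + 1)) (advIIpsB p0 τ h n) ∧
        G.le ((h n).2) (advIIpsB p0 τ h n)) →
      advIIOut τ h ∈ Y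

/-- `(p₀, τ)` is a strategy for player II in Kastanas' game `K_p`
(it always produces legal moves). -/
def IsIIStratK (p p0 : P) (τ : List (X × P) → X × P) : Prop :=
  G.le p0 p ∧ ∀ (h : ℕ → X × P) (n : ℕ),
    G.tri (preSeq (advIIOut τ h) (2 * n + 2)) ((h n).2) ∧
      G.le (advIIpsB p0 τ h (n + 1)) ((h n).2)

/-- `h` extends the finite list `l` of moves. -/
def extFun (h : ℕ → X × P) (l : List (X × P)) : Prop := (List.range l.length).map h = l

/-- The list `l` of moves of player I determines a state (a legal partial play ending with
a move of II) when II follows the strategy `(p₀, τ)` in `K_p`. -/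
def IsStateK (p0 : P) (τ : List (X × P) → X × P) (l : List (X × P)) : Prop :=
  ∀ h : ℕ → X × P, extFun h l → ∀ k < l.length,
    G.tri (preSeq (advIIOut τ h) (2 * k + 1)) (advIIpsB p0 τ h k) ∧
      G.le ((h k).2) (advIIpsB p0 τ h k)

/-- Player I can legally continue the state determined by `l` by the move `(x, u)`. -/
def CanContinue (p0 : P) (τ : List (X × P) → X × P) (l : List (X × P)) (x : X) (u : P) : Prop :=
  ∀ h : ℕ → X × P, extFun h (l ++ [(x, u)]) →
    G.tri (preSeq (advIIOut τ h) (2 * l.length + 1)) (advIIpsB p0 τ h l.length) ∧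
      G.le u (advIIpsB p0 τ h l.length)

/-- The pigeonhole principle for a Gowers space. -/
def Pigeonhole : Prop :=
  ∀ (p : P) (s : List X) (A : Set X), ∃ q, G.le q p ∧
    ((∀ x, G.tri (s ++ [x]) q → x ∈ A) ∨ ∀ x, G.tri (s ++ [x]) q → x ∉ A)

/-- A set is strategically Ramsey. -/
def StrategicallyRamsey (Y : Set (ℕ → X)) : Prop :=
  ∀ p : P, ∃ q, G.le q p ∧ (G.IStratF q Yᶜ ∨ G.IIStratG q Y)

/-- The doubled Gowers space, over the set of points `X × Bool`. -/
def double : GowersSpace P (X × Bool) where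
  le := G.le
  les := G.les
  tri := fun s p => G.tri (s.map Prod.fst) p
  le_refl := G.le_refl
  le_trans := G.le_trans
  les_refl := G.les_refl
  les_trans := G.les_trans
  le_imp_les := G.le_imp_les
  diag := G.diag
  decseq := G.decseq
  ext := fun p s => by
    obtain ⟨x, hx⟩ := G.ext p (s.map Prod.fst)
    exact ⟨(x, true), by simpa using hx⟩
  mono := fun s p q h hle => G.mono _ p q h hle

end GowersSpace

theorem stmt3 {P X : Type} [Nonempty P] [Nonempty X] [Countable X]
    (G : GowersSpace P X) (p p0 : P) (τ : List (X × P) → X × P)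
    (hτ : G.IsIIStratK p p0 τ)
    (𝒮 : Set (List (X × P))) (hcount : 𝒮.Countable)
    (hstates : ∀ l ∈ 𝒮, G.IsStateK p0 τ l)
    (r : P) :
    ∃ rs, G.le rs r ∧
      ∀ l ∈ 𝒮, ∀ (x y : X),
        (∃ u v : P, G.CanContinue p0 τ l x u ∧ τ (l ++ [(x, u)]) = (y, v) ∧ G.compat v rs) →
        ∃ u' v' : P, G.CanContinue p0 τ l x u' ∧ τ (l ++ [(x, u')]) = (y, v') ∧
          G.compat v' rs ∧ G.les rs v' := by
  classical
  rcases 𝒮.eq_empty_or_nonempty with hS | hS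
  · exact ⟨r, G.le_refl r, by simp [hS]⟩
  · set A : Set (List (X × P) × X × X) := {t | t.1 ∈ 𝒮} with hA
    have hAeq : A = 𝒮 ×ˢ (Set.univ : Set (X × X)) := by
      ext ⟨l, x, y⟩; simp [hA]
    have hAc : A.Countable := by
      rw [hAeq]; exact hcount.prod Set.countable_univ
    have hAne : A.Nonempty := by
      obtain ⟨l0, hl0⟩ := hS
      obtain ⟨x0⟩ := (inferInstance : Nonempty X)
      exact ⟨(l0, x0, x0), hl0⟩
    obtain ⟨e, hAe⟩ := Set.Countable.exists_eq_range hAc hAne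
    have hstep : ∀ (q : P) (t : List (X × P) × X × X), ∃ q', G.le q' q ∧
        ((∃ u v w, G.CanContinue p0 τ t.1 t.2.1 u ∧
            τ (t.1 ++ [(t.2.1, u)]) = (t.2.2, v) ∧ G.le w v ∧ G.le w q) →
          ∃ u v, G.CanContinue p0 τ t.1 t.2.1 u ∧
            τ (t.1 ++ [(t.2.1, u)]) = (t.2.2, v) ∧ G.le q' v) := by
      intro q t
      by_cases h : ∃ u v w, G.CanContinue p0 τ t.1 t.2.1 u ∧
          τ (t.1 ++ [(t.2.1, u)]) = (t.2.2, v) ∧ G.le w v ∧ G.le w q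
      · obtain ⟨u, v, w, h1, h2, h3, h4⟩ := h
        exact ⟨w, h4, fun _ => ⟨u, v, h1, h2, h3⟩⟩
      · exact ⟨q, G.le_refl q, fun h' => absurd h' h⟩
    choose step hstep1 hstep2 using hstep
    set rseq : ℕ → P := fun n => Nat.rec r (fun k q => step q (e k)) n with hrseq
    have hdec : ∀ n, G.le (rseq (n + 1)) (rseq n) := fun n => hstep1 _ _
    obtain ⟨rstar, hrstar⟩ := G.decseq rseq hdec
    obtain ⟨rs, hrs1, hrs2, hrs3⟩ := G.diag rstar r (hrstar 0)
    refine ⟨rs, hrs2, ?_⟩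
    rintro l hl x y ⟨u, v, hcc, hh, w, hwv, hwrs⟩
    have ht : ((l, x, y) : List (X × P) × X × X) ∈ A := hl
    rw [hAe] at ht
    obtain ⟨n, hn⟩ := ht
    have hles : G.les w (rseq n) :=
      G.les_trans _ _ _ (G.le_imp_les _ _ (G.le_trans _ _ _ hwrs hrs1)) (hrstar n)
    obtain ⟨w', hw'1, hw'2, -⟩ := G.diag w (rseq n) hles
    have key := hstep2 (rseq n) (e n)
    have hstar : G.les rstar (step (rseq n) (e n)) := hrstar (n + 1)
    rw [hn] at key hstar
    obtain ⟨u', v', h1, h2, h3⟩ := key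
      ⟨u, v, w', hcc, hh, G.le_trans _ _ _ hw'1 hwv, hw'2⟩
    have hlesv' : G.les rs v' :=
      G.les_trans _ _ _ (G.le_imp_les _ _ hrs1)
        (G.les_trans _ _ _ hstar (G.le_imp_les _ _ h3))
    obtain ⟨z, hz1, hz2, -⟩ := G.diag rs v' hlesv'
    exact ⟨u', v', h1, h2, ⟨z, hz2, hz1⟩, hlesv'⟩
end

section
/- Let G = (P, X, ≤, ≤*, ◁) be a Gowers space, and let G' = (P, X', ≤, ≤*, ◁') be the Gowers space with X' = X × {0,1} and (x_0, ε_0, …, x_n, ε_n) ◁' p if and only if (x_0, …, x_n) ◁ p. Let π : X'^ω → X^ω be the coordinatewise projection, let 𝒳' ⊆ X'^ω, let 𝒳 = π(𝒳'), and let q ∈ P. If player I has a strategy in the asymptotic game F'_q of G' to reach the complement of 𝒳', then player I has a strategy in the asymptotic game F_q of G to reach the complement of 𝒳. -/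
open MeasureTheory Filter Topology TopologicalSpace

/-! ### Auxiliary lemmas for `stmt6` -/

/-- All boolean lists of length `n` (and more). -/
def boolLists : ℕ → List (List Bool)
  | 0 => [[]]
  | n + 1 => (boolLists n).flatMap fun l => [false :: l, true :: l]

lemma mem_boolLists : ∀ b : List Bool, b ∈ boolLists b.length := by
  intro b
  induction b with
  | nil => simp [boolLists]
  | cons a b ih =>
    show a :: b ∈ boolLists (b.length + 1)
    simp only [boolLists, List.mem_flatMap]
    exact ⟨b, ih, by cases a <;> simp⟩

namespace GowersSpace

variable {P X : Type*} (G : GowersSpace P X)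

lemma exists_meet (q : P) : ∀ l : List P, l ≠ [] → (∀ p ∈ l, G.lap p q) →
    ∃ r, G.lap r q ∧ ∀ p ∈ l, G.le r p := by
  intro l
  induction l with
  | nil => simp
  | cons p l ih =>
    intro _ hl
    rcases eq_or_ne l [] with rfl | hne
    · exact ⟨p, hl p (by simp), by simp [G.le_refl]⟩
    · obtain ⟨r', hr'q, hr'le⟩ := ih hne (fun p hp => hl p (List.mem_cons_of_mem _ hp))
      have hpq : G.lap p q := hl p (by simp)
      have hles : G.les p r' := G.les_trans _ _ _ (G.le_imp_les _ _ hpq.1) hr'q.2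
      obtain ⟨r, hr1, hr2, hr3⟩ := G.diag p r' hles
      refine ⟨r, ⟨G.le_trans _ _ _ hr1 hpq.1, G.les_trans _ _ _ hpq.2 hr3⟩, ?_⟩
      intro s hs
      rcases List.mem_cons.1 hs with rfl | hs
      · exact hr1
      · exact G.le_trans _ _ _ hr2 (hr'le s hs)

end GowersSpace

theorem stmt6 {P X : Type} [Nonempty P] [Nonempty X] [Countable X]
    (G : GowersSpace P X) (𝒳' : Set (ℕ → X × Bool)) (q : P)
    (h : (G.double).IStratF q (𝒳'ᶜ)) :
    G.IStratF q ((fun z : ℕ → X × Bool => fun n => (z n).1) '' 𝒳')ᶜ := by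
  obtain ⟨σ', hσ'lap, hσ'win⟩ := h
  have key : ∀ s : List X, ∃ r, G.lap r q ∧
      ∀ s' : List (X × Bool), s'.map Prod.fst = s → G.le r (σ' s') := by
    intro s
    set L := (boolLists s.length).map fun b => σ' (s.zip b) with hL
    have hne : L ≠ [] := by
      have hmem : List.replicate s.length false ∈ boolLists s.length := by
        have := mem_boolLists (List.replicate s.length false)
        simpa using this
      intro hnil
      rw [hL, List.map_eq_nil_iff] at hnil
      simp [hnil] at hmem
    obtain ⟨r, hrq, hrle⟩ := G.exists_meet q L hne (by
      intro p hp
      rw [hL, List.mem_map] at hp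
      obtain ⟨b, _, rfl⟩ := hp
      exact hσ'lap _)
    refine ⟨r, hrq, ?_⟩
    intro s' hs'
    apply hrle
    rw [hL, List.mem_map]
    refine ⟨s'.map Prod.snd, ?_, ?_⟩
    · have hlen : (s'.map Prod.snd).length = s.length := by
        rw [← hs']; simp
      have := mem_boolLists (s'.map Prod.snd)
      rwa [hlen] at this
    · rw [← hs']
      congr 1
      rw [← List.unzip_fst, ← List.unzip_snd, List.zip_unzip]
  choose σ hσ1 hσ2 using key
  refine ⟨σ, fun s => hσ1 s, ?_⟩
  intro x hx hmem
  obtain ⟨z, hz, hzx⟩ := hmem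
  have hproj : ∀ m, (preSeq z m).map Prod.fst = preSeq x m := by
    intro m
    have hfz : Prod.fst ∘ z = x := funext fun k => congrFun hzx k
    simp only [preSeq, List.map_map, hfz]
  have : z ∈ 𝒳'ᶜ := by
    apply hσ'win
    intro n
    show G.tri ((preSeq z (n + 1)).map Prod.fst) (σ' (preSeq z n))
    rw [hproj]
    exact G.mono _ _ _ (hx n) (hσ2 (preSeq x n) (preSeq z n) (hproj n))
  exact this hz
end

section
/- Let G = (P, X, ≤, ≤*, ◁) be a Gowers space, 𝒳 ⊆ X^ω and p ∈ P. If player I has a strategy in the asymptotic game F_p to reach 𝒳, then player II has a strategy in Gowers' game G_p to reach 𝒳. -/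
open MeasureTheory Filter Topology TopologicalSpace

namespace Stmt8Aux

variable {P X : Type}

lemma pick_exists [Nonempty X] (G : GowersSpace P X) (σ : List X → P) (p : P)
    (s : List X) (q : P) :
    ∃ x, (G.le q p ∧ G.les p (σ s)) → (G.tri (s ++ [x]) q ∧ G.tri (s ++ [x]) (σ s)) := by
  by_cases hq : G.le q p ∧ G.les p (σ s)
  · have hles : G.les q (σ s) := G.les_trans q p (σ s) (G.le_imp_les q p hq.1) hq.2
    obtain ⟨r, hr1, hr2, _⟩ := G.diag q (σ s) hles
    obtain ⟨x, hx⟩ := G.ext r s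
    exact ⟨x, fun _ => ⟨G.mono _ r q hx hr1, G.mono _ r (σ s) hx hr2⟩⟩
  · exact ⟨Classical.arbitrary X, fun hc => absurd hc hq⟩

/-- A choice of a point compatible with both `q` and `σ s`. -/
noncomputable def pickX [Nonempty X] (G : GowersSpace P X) (σ : List X → P) (p : P)
    (s : List X) (q : P) : X :=
  Classical.choose (pick_exists G σ p s q)

lemma pickX_spec [Nonempty X] (G : GowersSpace P X) (σ : List X → P) (p : P)
    (s : List X) (q : P) (h1 : G.le q p) (h2 : G.les p (σ s)) :
    G.tri (s ++ [pickX G σ p s q]) q ∧ G.tri (s ++ [pickX G σ p s q]) (σ s) :=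
  Classical.choose_spec (pick_exists G σ p s q) ⟨h1, h2⟩

/-- Accumulate player II's moves along a list of moves of player I. -/
def go (pk : List X → P → X) : List X → List P → List X
  | s, [] => s
  | s, q :: l => go pk (s ++ [pk s q]) l

lemma go_append (pk : List X → P → X) :
    ∀ (l : List P) (s : List X) (q : P),
      go pk s (l ++ [q]) = go pk s l ++ [pk (go pk s l) q] := by
  intro l
  induction l with
  | nil => intro s q; rfl
  | cons a l ih => intro s q; simp only [List.cons_append, go]; exact ih _ _

end Stmt8Aux

theorem stmt8 {P X : Type} [Nonempty P] [Nonempty X] [Countable X]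
    (G : GowersSpace P X) (𝒳 : Set (ℕ → X)) (p : P)
    (h : G.IStratF p 𝒳) :
    G.IIStratG p 𝒳 := by
  classical
  obtain ⟨σ, hσ, hwin⟩ := h
  set pk := Stmt8Aux.pickX G σ p with hpk
  refine ⟨fun l => (Stmt8Aux.go pk [] l).getLast?.getD (Classical.arbitrary X), ?_⟩
  intro f hf
  set τ : List P → X :=
    fun l => (Stmt8Aux.go pk [] l).getLast?.getD (Classical.arbitrary X) with hτ
  set x := gOut τ f with hx
  -- key lemma: the accumulated list equals `preSeq x n`
  have hgo : ∀ n, Stmt8Aux.go pk [] ((List.range n).map f) = preSeq x n := by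
    intro n
    induction n with
    | zero => simp [preSeq, Stmt8Aux.go]
    | succ n ih =>
      have hr : (List.range (n + 1)).map f = (List.range n).map f ++ [f n] := by
        simp [List.range_succ]
      have hstep : Stmt8Aux.go pk [] ((List.range (n + 1)).map f) =
          Stmt8Aux.go pk [] ((List.range n).map f) ++
            [pk (Stmt8Aux.go pk [] ((List.range n).map f)) (f n)] := by
        rw [hr, Stmt8Aux.go_append]
      have hxn : x n = pk (preSeq x n) (f n) := by
        have : x n = τ ((List.range (n + 1)).map f) := rfl
        rw [this, hτ]
        simp only [hstep, ih, List.getLast?_concat, Option.getD_some]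
      rw [hstep, ih, ← hxn]
      simp [preSeq, List.range_succ]
  have hxn : ∀ n, x n = pk (preSeq x n) (f n) := by
    intro n
    have hr : (List.range (n + 1)).map f = (List.range n).map f ++ [f n] := by
      simp [List.range_succ]
    have : x n = τ ((List.range (n + 1)).map f) := rfl
    rw [this, hτ]
    simp only [hr, Stmt8Aux.go_append, List.getLast?_concat, Option.getD_some, hgo]
  have hps : ∀ n, preSeq x (n + 1) = preSeq x n ++ [x n] := by
    intro n; simp [preSeq, List.range_succ]
  have htri : ∀ n, G.tri (preSeq x (n + 1)) (f n) ∧ G.tri (preSeq x (n + 1)) (σ (preSeq x n)) := by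
    intro n
    rw [hps, hxn n]
    exact Stmt8Aux.pickX_spec G σ p (preSeq x n) (f n) (hf n) (hσ (preSeq x n)).2
  exact ⟨fun n => (htri n).1, hwin x fun n => (htri n).2⟩
end

section
/- Let 𝒳 ⊆ ω^ω and let M be an infinite subset of ω. Suppose player I has a strategy in the asymptotic game F_M of the Mathias–Silver space to reach 𝒳. Then there exists an infinite N ⊆ M such that every strictly increasing sequence of elements of N belongs to 𝒳 (that is, identifying infinite subsets of ω with their increasing enumerations, every infinite subset of N belongs to 𝒳). -/
open MeasureTheory Filter Topology TopologicalSpace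

/-- The set of elements of `M` that obey `σ` against every subset of `F`. -/
def goodSet (σ : List ℕ → Set ℕ) (M : Set ℕ) (F : Finset ℕ) : Set ℕ :=
  M \ ⋃ G ∈ F.powerset, (M \ σ (G.sort (· ≤ ·)))

open Classical in
noncomputable def pick (σ : List ℕ → Set ℕ) (M : Set ℕ) (F : Finset ℕ) : ℕ :=
  if h : ∃ m, m ∈ goodSet σ M F ∧ ∀ a ∈ F, a < m then h.choose else 0

noncomputable def stage (σ : List ℕ → Set ℕ) (M : Set ℕ) : ℕ → Finset ℕ
  | 0 => ∅
  | k + 1 => insert (pick σ M (stage σ M k)) (stage σ M k)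

lemma exists_pick {σ : List ℕ → Set ℕ} {M : Set ℕ} (hM : M.Infinite)
    (hσ1 : ∀ s, σ s ⊆ M ∧ (M \ σ s).Finite) (F : Finset ℕ) :
    ∃ m, m ∈ goodSet σ M F ∧ ∀ a ∈ F, a < m := by
  have hfin : (⋃ G ∈ F.powerset, (M \ σ (G.sort (· ≤ ·)))).Finite :=
    Set.Finite.biUnion F.powerset.finite_toSet (fun G _ => (hσ1 _).2)
  have hinf : (goodSet σ M F).Infinite := hM.diff hfin
  obtain ⟨m, hm, hlt⟩ := hinf.exists_gt (F.sup id)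
  exact ⟨m, hm, fun a ha => lt_of_le_of_lt (Finset.le_sup (f := id) ha) hlt⟩

lemma pick_spec {σ : List ℕ → Set ℕ} {M : Set ℕ} (hM : M.Infinite)
    (hσ1 : ∀ s, σ s ⊆ M ∧ (M \ σ s).Finite) (F : Finset ℕ) :
    pick σ M F ∈ goodSet σ M F ∧ ∀ a ∈ F, a < pick σ M F := by
  classical
  rw [pick, dif_pos (exists_pick hM hσ1 F)]
  exact (exists_pick hM hσ1 F).choose_spec

theorem stmt9 (𝒳 : Set (ℕ → ℕ)) (M : Set ℕ) (hM : M.Infinite)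
    (h : ∃ σ : List ℕ → Set ℕ, (∀ s, σ s ⊆ M ∧ (M \ σ s).Finite) ∧
      ∀ x : ℕ → ℕ, (∀ n, x n ∈ σ (preSeq x n)) → x ∈ 𝒳) :
    ∃ N : Set ℕ, N ⊆ M ∧ N.Infinite ∧
      ∀ x : ℕ → ℕ, StrictMono x → (∀ n, x n ∈ N) → x ∈ 𝒳 := by
  obtain ⟨σ, hσ1, hσ2⟩ := h
  set p : ℕ → ℕ := fun k => pick σ M (stage σ M k) with hp
  have hpick := pick_spec hM hσ1
  -- pick is greater than all elements of its stage
  have hgt : ∀ k, ∀ a ∈ stage σ M k, a < p k := fun k => (hpick (stage σ M k)).2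
  -- pick lands in goodSet
  have hgood : ∀ k, p k ∈ goodSet σ M (stage σ M k) := fun k => (hpick (stage σ M k)).1
  -- stages are monotone
  have hmono : ∀ {j i}, j ≤ i → stage σ M j ⊆ stage σ M i := by
    intro j i hji
    induction i with
    | zero => simp_all
    | succ i ih =>
      rcases Nat.lt_or_ge j (i + 1) with hc | hc
      · exact (ih (Nat.lt_succ_iff.mp hc)).trans (Finset.subset_insert _ _)
      · have : j = i + 1 := le_antisymm hji hc
        subst this; exact subset_rfl
  have hpmem : ∀ {j i}, j < i → p j ∈ stage σ M i := by
    intro j i hji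
    exact hmono hji (Finset.mem_insert_self _ _)
  have hpmono : StrictMono p := by
    intro j i hji
    exact hgt i (p j) (hpmem hji)
  set N : Set ℕ := {m | ∃ k, m ∈ stage σ M k} with hN
  -- membership in M
  have hstageM : ∀ k, ∀ a ∈ stage σ M k, a ∈ M := by
    intro k
    induction k with
    | zero => simp [stage]
    | succ k ih =>
      intro a ha
      rcases Finset.mem_insert.mp ha with rfl | ha
      · exact (hgood k).1
      · exact ih a ha
  -- every element of N is some p j
  have hNp : ∀ m ∈ N, ∃ j, m = p j := by
    rintro m ⟨k, hk⟩
    induction k with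
    | zero => simp [stage] at hk
    | succ k ih =>
      rcases Finset.mem_insert.mp hk with rfl | hk
      · exact ⟨k, rfl⟩
      · exact ih hk
  -- elements of later stages below p j are already in stage j
  have hbelow : ∀ i j, j ≤ i → ∀ a ∈ stage σ M i, a < p j → a ∈ stage σ M j := by
    intro i
    induction i with
    | zero => intro j hj a ha; simp [stage] at ha
    | succ i ih =>
      intro j hj a ha hlt
      rcases Nat.lt_or_ge j (i + 1) with hc | hc
      · have hj' : j ≤ i := Nat.lt_succ_iff.mp hc
        rcases Finset.mem_insert.mp ha with rfl | ha
        · -- a = p i, but p j ≤ p i since j ≤ i, contradiction with p i < p j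
          exact absurd hlt (not_lt.mpr (hpmono.monotone hj'))
        · exact ih j hj' a ha hlt
      · have : j = i + 1 := le_antisymm hj hc
        subst this; exact ha
  -- key: if G ⊆ N, m ∈ N, all elements of G below m, then m ∈ σ (G.sort)
  have hkey : ∀ (G : Finset ℕ), ↑G ⊆ N → ∀ m ∈ N, (∀ a ∈ G, a < m) →
      m ∈ σ (G.sort (· ≤ ·)) := by
    intro G hG m hm hlt
    obtain ⟨j, rfl⟩ := hNp m hm
    have hGsub : G ⊆ stage σ M j := by
      intro a ha
      obtain ⟨k, hk⟩ := hG ha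
      rcases Nat.le_total k j with hkj | hjk
      · exact hmono hkj hk
      · exact hbelow k j hjk a hk (hlt a ha)
    have h2 : p j ∉ M \ σ (G.sort (· ≤ ·)) := fun hc =>
      (hgood j).2 (Set.mem_biUnion (Finset.mem_powerset.mpr hGsub) hc)
    by_contra hcon
    exact h2 ⟨(hgood j).1, hcon⟩
  refine ⟨N, ?_, ?_, ?_⟩
  · rintro m ⟨k, hk⟩
    exact hstageM k m hk
  · apply Set.infinite_of_forall_exists_gt
    intro a
    exact ⟨p (a + 1), ⟨a + 2, hpmem (Nat.lt_succ_self _)⟩,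
      lt_of_lt_of_le (Nat.lt_succ_self a) hpmono.le_apply⟩
  · intro x hx hxN
    apply hσ2
    intro n
    set G : Finset ℕ := ((List.range n).map x).toFinset with hG
    have hnodup : ((List.range n).map x).Nodup :=
      List.Nodup.map hx.injective List.nodup_range
    have hsorted' : ((List.range n).map x).Pairwise (· < ·) :=
      List.Pairwise.map x (fun _ _ hab => hx hab) List.pairwise_lt_range
    have hsorted : ((List.range n).map x).Pairwise (· ≤ ·) := hsorted'.imp le_of_lt
    have hsort : G.sort (· ≤ ·) = (List.range n).map x :=
      (List.toFinset_sort (· ≤ ·) hnodup).mpr hsorted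
    have : x n ∈ σ (G.sort (· ≤ ·)) := by
      apply hkey
      · intro a ha
        rw [Finset.mem_coe, hG, List.mem_toFinset, List.mem_map] at ha
        obtain ⟨j, _, rfl⟩ := ha
        exact hxN j
      · exact hxN n
      · intro a ha
        rw [hG, List.mem_toFinset, List.mem_map] at ha
        obtain ⟨j, hj, rfl⟩ := ha
        exact hx (List.mem_range.mp hj)
    rwa [hsort] at this
end

section
/- Let G = (P, X, ≤, ≤*, ◁) be a Gowers space satisfying the pigeonhole principle, let 𝒳 ⊆ X^ω and p ∈ P. If player II has a strategy in Gowers' game G_p to reach 𝒳, then there exists q ≤ p such that player I has a strategy in the asymptotic game F_q to reach 𝒳. -/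
open MeasureTheory Filter Topology TopologicalSpace

/-! ## Auxiliary machinery for stmt10 -/

namespace Stmt10Aux

open scoped Classical

lemma preSeq_succ' {X : Type*} (x : ℕ → X) (n : ℕ) :
    preSeq x (n + 1) = preSeq x n ++ [x n] := by
  simp [preSeq, List.range_succ]

@[simp] lemma preSeq_length' {X : Type*} (x : ℕ → X) (n : ℕ) :
    (preSeq x n).length = n := by simp [preSeq]

lemma preSeq_eq_of {X : Type*} (y : ℕ → X) (s : List X)
    (h : ∀ k (hk : k < s.length), y k = s.get ⟨k, hk⟩) :
    preSeq y s.length = s := by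
  apply List.ext_get (by simp)
  intro k h1 h2
  simpa [preSeq] using h k h2

lemma map_range_getD {α : Type*} (L : List α) (d : α) :
    ∀ m, m ≤ L.length → (List.range m).map (fun k => L.getD k d) = L.take m := by
  intro m
  induction m with
  | zero => simp
  | succ n ih =>
    intro hm
    rw [List.range_succ, List.map_append, ih (Nat.le_of_succ_le hm)]
    have hn : n < L.length := hm
    rw [List.take_succ, List.getElem?_eq_getElem hn]
    simp [List.getElem?_eq_getElem hn]

variable {P X : Type} (G : GowersSpace P X) (p : P) (τ : List P → X)

/-- Pick a legal move of player I producing answer `x` after the play `l`, if one exists. -/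
noncomputable def pick (l : List P) (x : X) : P :=
  if h : ∃ u, G.le u p ∧ τ (l ++ [u]) = x then h.choose else p

lemma pick_le (l : List P) (x : X) : G.le (pick G p τ l x) p := by
  unfold pick
  by_cases h : ∃ u, G.le u p ∧ τ (l ++ [u]) = x
  · rw [dif_pos h]; exact h.choose_spec.1
  · rw [dif_neg h]; exact G.le_refl p

lemma pick_ans {l : List P} {x : X} (h : ∃ u, G.le u p ∧ τ (l ++ [u]) = x) :
    τ (l ++ [pick G p τ l x]) = x := by
  unfold pick
  rw [dif_pos h]
  exact h.choose_spec.2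

/-- Witness play, indexed by reversed outcome sequences. -/
noncomputable def W' : List X → List P
  | [] => []
  | x :: t => W' t ++ [pick G p τ (W' t) x]

/-- Witness play whose outcome attempts to be `s`. -/
noncomputable def W (s : List X) : List P := W' G p τ s.reverse

@[simp] lemma W_nil : W G p τ [] = [] := rfl

lemma W_append (s : List X) (x : X) :
    W G p τ (s ++ [x]) = W G p τ s ++ [pick G p τ (W G p τ s) x] := by
  simp only [W, List.reverse_append, List.reverse_singleton, List.singleton_append]
  rfl

lemma W'_length (t : List X) : (W' G p τ t).length = t.length := by
  induction t with
  | nil => rfl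
  | cons x t ih => simp [W', ih]

@[simp] lemma W_length (s : List X) : (W G p τ s).length = s.length := by
  simp [W, W'_length]

lemma W'_mem_le (t : List X) : ∀ u ∈ W' G p τ t, G.le u p := by
  induction t with
  | nil => simp [W']
  | cons x t ih =>
    intro u hu
    rcases List.mem_append.1 hu with h | h
    · exact ih u h
    · rw [List.mem_singleton.1 h]; exact pick_le G p τ _ _

lemma W_mem_le (s : List X) : ∀ u ∈ W G p τ s, G.le u p := W'_mem_le G p τ s.reverse


/-- The invariant: the witness play `W s` really has outcome `s`. -/
def Good (s : List X) : Prop :=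
  ∀ k (hk : k < s.length), τ ((W G p τ s).take (k + 1)) = s.get ⟨k, hk⟩

lemma good_nil : Good G p τ [] := by
  intro k hk
  simp at hk

lemma good_step (s : List X) (x : X) (h : Good G p τ s)
    (hx : ∃ u, G.le u p ∧ τ (W G p τ s ++ [u]) = x) : Good G p τ (s ++ [x]) := by
  intro k hk
  rw [W_append]
  rcases Nat.lt_or_ge k s.length with hks | hks
  · have h1 : k + 1 ≤ (W G p τ s).length := by rw [W_length]; omega
    rw [List.take_append_of_le_length h1]
    have h2 : (s ++ [x]).get ⟨k, hk⟩ = s.get ⟨k, hks⟩ := by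
      simp [List.getElem_append_left hks]
    rw [h2]
    exact h k hks
  · have hk' : k = s.length := by
      have : k < s.length + 1 := by simpa using hk
      omega
    subst hk'
    have h1 : (W G p τ s ++ [pick G p τ (W G p τ s) x]).length = s.length + 1 := by
      simp
    rw [← h1, List.take_length, pick_ans G p τ hx]
    have : (s ++ [x]).get ⟨s.length, hk⟩ = x := by
      simp
    rw [this]

/-- Along a branch `x`, the moves of the witness plays cohere. -/
lemma W_preSeq (x : ℕ → X) (n : ℕ) :
    (List.range n).map (fun k => pick G p τ (W G p τ (preSeq x k)) (x k)) =
      W G p τ (preSeq x n) := by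
  induction n with
  | zero => simp [preSeq]
  | succ n ih =>
    rw [List.range_succ, List.map_append, ih, preSeq_succ', W_append]
    rfl

/-- Key step: at a good state `s`, any `q ≤ p` contains a point reachable by `τ`. -/
lemma key_exists (s : List X) (hG : Good G p τ s) (q : P) (hqp : G.le q p)
    (hleg : ∀ f : ℕ → P, (∀ n, G.le (f n) p) →
      ∀ n, G.tri (preSeq (gOut τ f) (n + 1)) (f n)) :
    ∃ y, G.tri (s ++ [y]) q ∧ ∃ u, G.le u p ∧ τ (W G p τ s ++ [u]) = y := by
  set L : List P := W G p τ s ++ [q] with hL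
  have hLlen : L.length = s.length + 1 := by simp [hL]
  set f : ℕ → P := fun k => L.getD k p with hf
  have hfle : ∀ k, G.le (f k) p := by
    intro k
    by_cases hk : k < L.length
    · rw [hf]
      simp only
      rw [List.getD_eq_getElem L p hk]
      have hmem : L[k] ∈ L := List.getElem_mem hk
      rcases List.mem_append.1 hmem with hm | hm
      · exact W_mem_le G p τ s _ hm
      · rw [List.mem_singleton.1 hm]; exact hqp
    · rw [hf]
      simp only
      rw [List.getD_eq_default L p (by omega)]
      exact G.le_refl p
  have hful := hleg f hfle
  set y : ℕ → X := gOut τ f with hy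
  have hmapf : ∀ m, m ≤ L.length → (List.range m).map f = L.take m :=
    map_range_getD L p
  have hyk : ∀ k (hk : k < s.length), y k = s.get ⟨k, hk⟩ := by
    intro k hk
    show τ ((List.range (k + 1)).map f) = _
    rw [hmapf (k + 1) (by omega)]
    have h2 : L.take (k + 1) = (W G p τ s).take (k + 1) := by
      rw [hL]
      exact List.take_append_of_le_length (by rw [W_length]; omega)
    rw [h2]
    exact hG k hk
  have hpre : preSeq y s.length = s := preSeq_eq_of y s hyk
  have htri := hful s.length
  have hfs : f s.length = q := by
    rw [hf]
    simp only
    rw [List.getD_eq_getElem L p (by omega)]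
    have hw := W_length G p τ s
    simp [hL, List.getElem_append_right, hw]
  have hps1 : preSeq y (s.length + 1) = s ++ [y s.length] := by
    rw [preSeq_succ', hpre]
  rw [hps1, hfs] at htri
  refine ⟨y s.length, htri, q, hqp, ?_⟩
  have : τ ((List.range (s.length + 1)).map f) = y s.length := rfl
  rw [hmapf (s.length + 1) (by omega)] at this
  rw [← hLlen, List.take_length] at this
  rw [← hL]
  exact this

end Stmt10Aux


open Stmt10Aux in
theorem stmt10 {P X : Type} [Nonempty P] [Nonempty X] [Countable X]
    (G : GowersSpace P X) (hPH : G.Pigeonhole)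
    (𝒳 : Set (ℕ → X)) (p : P)
    (h : G.IIStratG p 𝒳) :
    ∃ q, G.le q p ∧ G.IStratF q 𝒳 := by
  classical
  obtain ⟨τ, hτ⟩ := h
  have hleg : ∀ f : ℕ → P, (∀ n, G.le (f n) p) →
      ∀ n, G.tri (preSeq (gOut τ f) (n + 1)) (f n) := fun f hf => (hτ f hf).1
  obtain ⟨g, hg⟩ := exists_surjective_nat (List X)
  -- the fusion sequence
  let r : ℕ → P := fun n => Nat.rec p
    (fun n rn => (hPH rn (g n)
      {x | ∃ u, G.le u p ∧ τ (W G p τ (g n) ++ [u]) = x}).choose) n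
  have hrspec : ∀ n, G.le (r (n + 1)) (r n) ∧
      ((∀ x, G.tri (g n ++ [x]) (r (n + 1)) →
          x ∈ {x | ∃ u, G.le u p ∧ τ (W G p τ (g n) ++ [u]) = x}) ∨
       (∀ x, G.tri (g n ++ [x]) (r (n + 1)) →
          x ∉ {x | ∃ u, G.le u p ∧ τ (W G p τ (g n) ++ [u]) = x})) :=
    fun n => (hPH (r n) (g n)
      {x | ∃ u, G.le u p ∧ τ (W G p τ (g n) ++ [u]) = x}).choose_spec
  have hrp : ∀ n, G.le (r n) p := by
    intro n
    induction n with
    | zero => exact G.le_refl p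
    | succ n ih => exact G.le_trans _ _ _ (hrspec n).1 ih
  obtain ⟨ps, hps⟩ := G.decseq r (fun n => (hrspec n).1)
  obtain ⟨Q, hQps, hQp, hpsQ⟩ := G.diag ps p (hps 0)
  -- the subspaces from the pigeonhole principle
  let qs : List X → P := fun s => r ((hg s).choose + 1)
  have hgq : ∀ s, g ((hg s).choose) = s := fun s => (hg s).choose_spec
  have hqsp : ∀ s, G.le (qs s) p := fun s => hrp ((hg s).choose + 1)
  have halt : ∀ s : List X,
      (∀ x, G.tri (s ++ [x]) (qs s) → ∃ u, G.le u p ∧ τ (W G p τ s ++ [u]) = x) ∨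
      (∀ x, G.tri (s ++ [x]) (qs s) → ¬ ∃ u, G.le u p ∧ τ (W G p τ s ++ [u]) = x) := by
    intro s
    have h2 := (hrspec ((hg s).choose)).2
    rw [hgq s] at h2
    exact h2
  have key : ∀ s : List X, Good G p τ s →
      ∀ x, G.tri (s ++ [x]) (qs s) → ∃ u, G.le u p ∧ τ (W G p τ s ++ [u]) = x := by
    intro s hGood
    rcases halt s with hpos | hneg
    · exact hpos
    · exfalso
      obtain ⟨y, hy1, hy2⟩ := key_exists G p τ s hGood (qs s) (hqsp s) hleg
      exact hneg y hy1 hy2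
  -- the strategy of player I
  have hlesQ : ∀ s, G.les Q (qs s) :=
    fun s => G.les_trans _ _ _ (G.le_imp_les _ _ hQps) (hps ((hg s).choose + 1))
  let σ : List X → P := fun s => (G.diag Q (qs s) (hlesQ s)).choose
  have hσ : ∀ s, G.le (σ s) Q ∧ G.le (σ s) (qs s) ∧ G.les Q (σ s) :=
    fun s => (G.diag Q (qs s) (hlesQ s)).choose_spec
  refine ⟨Q, hQp, σ, fun s => ⟨(hσ s).1, (hσ s).2.2⟩, ?_⟩
  -- any branch of the strategy is an outcome of τ
  intro x hx
  have hbranch : ∀ n, Good G p τ (preSeq x n) ∧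
      ∃ u, G.le u p ∧ τ (W G p τ (preSeq x n) ++ [u]) = x n := by
    intro n
    induction n with
    | zero =>
      have h0 : preSeq x 0 = ([] : List X) := by simp [preSeq]
      have hGood : Good G p τ (preSeq x 0) := by rw [h0]; exact good_nil G p τ
      refine ⟨hGood, key _ hGood (x 0) ?_⟩
      have := hx 0
      rw [preSeq_succ'] at this
      exact G.mono _ _ _ this (hσ (preSeq x 0)).2.1
    | succ n ih =>
      have hGood : Good G p τ (preSeq x (n + 1)) := by
        rw [preSeq_succ']
        exact good_step G p τ _ _ ih.1 ih.2
      refine ⟨hGood, key _ hGood (x (n + 1)) ?_⟩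
      have := hx (n + 1)
      rw [preSeq_succ' x (n + 1)] at this
      exact G.mono _ _ _ this (hσ (preSeq x (n + 1))).2.1
  -- the witness run of Gowers' game
  set F : ℕ → P := fun k => pick G p τ (W G p τ (preSeq x k)) (x k) with hF
  have hFle : ∀ n, G.le (F n) p := fun n => pick_le G p τ _ _
  have hout : gOut τ F = x := by
    funext n
    show τ ((List.range (n + 1)).map F) = x n
    rw [hF]
    rw [W_preSeq G p τ x (n + 1), preSeq_succ', W_append]
    exact pick_ans G p τ (hbranch n).2
  have := (hτ F hFle).2
  rwa [hout] at this
end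

section
/- Let G = (P, X, ≤, ≤*, ◁) be a Gowers space satisfying the pigeonhole principle, and let 𝒳 ⊆ X^ω be a strategically Ramsey set. Then for every p ∈ P there exists q ≤ p such that in the asymptotic game F_q, player I has a strategy either to reach 𝒳, or to reach the complement of 𝒳. -/
open MeasureTheory Filter Topology TopologicalSpace

namespace Stmt11Aux

attribute [local instance] Classical.propDecidable

variable {P X : Type*}

lemma preSeq_succ' {X : Type*} (x : ℕ → X) (n : ℕ) :
    preSeq x (n + 1) = preSeq x n ++ [x n] := by
  simp [preSeq, List.range_succ]

lemma preSeq_length' {X : Type*} (x : ℕ → X) (n : ℕ) : (preSeq x n).length = n := by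
  simp [preSeq]

lemma map_range_getD {α : Type*} (l : List α) (d : α) (m : ℕ) (h : m ≤ l.length) :
    (List.range m).map (fun k => l.getD k d) = l.take m := by
  apply List.ext_getElem
  · simp; omega
  · intro i h1 h2
    simp only [List.getElem_map, List.getElem_range, List.getElem_take]
    rw [List.getD_eq_getElem]

noncomputable def pickU (G : GowersSpace P X) (τ : List P → X) (q : P) (l : List P) (x : X) : P :=
  if h : ∃ u, G.le u q ∧ τ (l ++ [u]) = x then h.choose else q

lemma pickU_le (G : GowersSpace P X) (τ : List P → X) (q : P) (l : List P) (x : X) :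
    G.le (pickU G τ q l x) q := by
  unfold pickU; split
  · next h => exact h.choose_spec.1
  · exact G.le_refl q

lemma pickU_spec (G : GowersSpace P X) (τ : List P → X) (q : P) (l : List P) (x : X)
    (h : ∃ u, G.le u q ∧ τ (l ++ [u]) = x) : τ (l ++ [pickU G τ q l x]) = x := by
  unfold pickU; rw [dif_pos h]; exact h.choose_spec.2

noncomputable def runRev (G : GowersSpace P X) (τ : List P → X) (q : P) : List X → List P
  | [] => []
  | x :: t => runRev G τ q t ++ [pickU G τ q (runRev G τ q t) x]

noncomputable def run (G : GowersSpace P X) (τ : List P → X) (q : P) (s : List X) : List P :=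
  runRev G τ q s.reverse

lemma run_nil (G : GowersSpace P X) (τ : List P → X) (q : P) : run G τ q [] = [] := rfl

lemma run_append (G : GowersSpace P X) (τ : List P → X) (q : P) (s : List X) (x : X) :
    run G τ q (s ++ [x]) = run G τ q s ++ [pickU G τ q (run G τ q s) x] := by
  simp [run, runRev]

lemma runRev_length (G : GowersSpace P X) (τ : List P → X) (q : P) (l : List X) :
    (runRev G τ q l).length = l.length := by
  induction l with
  | nil => rfl
  | cons x t ih => simp [runRev, ih]

lemma run_length (G : GowersSpace P X) (τ : List P → X) (q : P) (s : List X) :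
    (run G τ q s).length = s.length := by
  simp [run, runRev_length]

lemma runRev_mem_le (G : GowersSpace P X) (τ : List P → X) (q : P) (l : List X) :
    ∀ u ∈ runRev G τ q l, G.le u q := by
  induction l with
  | nil => simp [runRev]
  | cons x t ih =>
    intro u hu
    simp only [runRev, List.mem_append, List.mem_singleton] at hu
    rcases hu with hu | rfl
    · exact ih u hu
    · exact pickU_le G τ q _ x

lemma run_mem_le (G : GowersSpace P X) (τ : List P → X) (q : P) (s : List X) :
    ∀ u ∈ run G τ q s, G.le u q := runRev_mem_le G τ q s.reverse

lemma getD_concat_length {α : Type*} (s : List α) (a d : α) :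
    (s ++ [a]).getD s.length d = a := by
  rw [List.getD_eq_getElem _ _ (by simp)]
  rw [List.getElem_append_right (le_refl _)]
  simp

end Stmt11Aux

theorem stmt11 {P X : Type} [Nonempty P] [Nonempty X] [Countable X]
    (G : GowersSpace P X) (hPH : G.Pigeonhole)
    (𝒳 : Set (ℕ → X)) (hSR : G.StrategicallyRamsey 𝒳) (p : P) :
    ∃ q, G.le q p ∧ (G.IStratF q 𝒳 ∨ G.IStratF q 𝒳ᶜ) := by
  classical
  obtain ⟨q₁, hq₁p, hcase⟩ := hSR p
  rcases hcase with hI | hII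
  · exact ⟨q₁, hq₁p, Or.inr hI⟩
  obtain ⟨τ, Hτ⟩ := hII
  set dX : X := Classical.arbitrary X with hdX
  set R : List X → List P := Stmt11Aux.run G τ q₁ with hR
  set A : List X → Set X := fun s => {x | ∃ u, G.le u q₁ ∧ τ (R s ++ [u]) = x} with hA
  obtain ⟨e, he⟩ := exists_surjective_nat (List X)
  set g : ℕ → P := fun i => Nat.rec q₁ (fun i r => (hPH r (e i) (A (e i))).choose) i with hg
  have hg0 : g 0 = q₁ := rfl
  have hgs : ∀ i, G.le (g (i+1)) (g i) ∧
      ((∀ x, G.tri (e i ++ [x]) (g (i+1)) → x ∈ A (e i)) ∨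
       (∀ x, G.tri (e i ++ [x]) (g (i+1)) → x ∉ A (e i))) :=
    fun i => (hPH (g i) (e i) (A (e i))).choose_spec
  obtain ⟨qstar, hqstar⟩ := G.decseq g (fun n => (hgs n).1)
  obtain ⟨Q, hQq, hQq₁, -⟩ := G.diag qstar q₁ (hqstar 0)
  have hQle : ∀ i, G.les Q (g i) := fun i =>
    G.les_trans _ _ _ (G.le_imp_les _ _ hQq) (hqstar i)
  have key : ∀ s : List X, ∃ r, G.lap r Q ∧
      ((∀ x, G.tri (s ++ [x]) r → x ∈ A s) ∨ (∀ x, G.tri (s ++ [x]) r → x ∉ A s)) := by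
    intro s
    obtain ⟨i, rfl⟩ := he s
    obtain ⟨r, hr1, hr2, hr3⟩ := G.diag Q (g (i+1)) (hQle (i+1))
    refine ⟨r, ⟨hr1, hr3⟩, ?_⟩
    rcases (hgs i).2 with h | h
    · exact Or.inl fun x hx => h x (G.mono _ _ _ hx hr2)
    · exact Or.inr fun x hx => h x (G.mono _ _ _ hx hr2)
  set Good : List X → Prop :=
    fun s => ∀ k, k < s.length → τ ((R s).take (k+1)) = s.getD k dX with hGood
  have key2 : ∀ s : List X, Good s → ∃ r, G.lap r Q ∧ ∀ x, G.tri (s ++ [x]) r → x ∈ A s := by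
    intro s hs
    obtain ⟨r, hrlap, halt⟩ := key s
    rcases halt with h | h
    · exact ⟨r, hrlap, h⟩
    exfalso
    have hrq₁ : G.le r q₁ := G.le_trans _ _ _ hrlap.1 hQq₁
    set f : ℕ → P := fun k => (R s ++ [r]).getD k r with hf
    have hRlen : (R s).length = s.length := Stmt11Aux.run_length G τ q₁ s
    have hlen : (R s ++ [r]).length = s.length + 1 := by
      simp [hRlen]
    have hfle : ∀ k, G.le (f k) q₁ := by
      intro k
      by_cases hk : k < (R s ++ [r]).length
      · have hmem : f k ∈ R s ++ [r] := by
          rw [hf]; simp only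
          rw [List.getD_eq_getElem _ _ hk]
          exact List.getElem_mem _
        rcases List.mem_append.1 hmem with h1 | h1
        · exact Stmt11Aux.run_mem_le G τ q₁ s _ h1
        · simp only [List.mem_singleton] at h1; rw [h1]; exact hrq₁
      · have hfk : f k = r := by
          rw [hf]; simp only
          exact List.getD_eq_default _ _ (by omega)
        rw [hfk]; exact hrq₁
    obtain ⟨hleg, -⟩ := Hτ f hfle
    have hmap : ∀ m, m ≤ s.length + 1 → (List.range m).map f = (R s ++ [r]).take m := by
      intro m hm
      exact Stmt11Aux.map_range_getD (R s ++ [r]) r m (by omega)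
    have hout : ∀ k, k < s.length → gOut τ f k = s.getD k dX := by
      intro k hk
      show τ ((List.range (k+1)).map f) = _
      rw [hmap (k+1) (by omega),
        List.take_append_of_le_length (by omega)]
      exact hs k hk
    set xs : X := gOut τ f s.length with hxs
    have hxs' : τ (R s ++ [r]) = xs := by
      rw [hxs]
      show _ = τ ((List.range (s.length+1)).map f)
      rw [hmap (s.length+1) le_rfl, List.take_of_length_le (by omega)]
    have hpre : preSeq (gOut τ f) (s.length + 1) = s ++ [xs] := by
      apply List.ext_getElem
      · simp [preSeq]
      · intro i h1 h2
        simp only [preSeq, List.getElem_map, List.getElem_range]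
        by_cases hi : i < s.length
        · rw [List.getElem_append_left hi, hout i hi, List.getD_eq_getElem _ _ hi]
        · have hi' : i = s.length := by
            simp only [preSeq, List.length_map, List.length_range] at h1; omega
          subst hi'
          rw [List.getElem_append_right (le_refl _)]
          simp [hxs]
    have hfs : f s.length = r := by
      rw [hf]; simp only
      rw [List.getD_eq_getElem _ _ (by omega)]
      rw [List.getElem_append_right (by omega)]
      simp [hRlen]
    have htri := hleg s.length
    rw [hpre, hfs] at htri
    exact h xs htri ⟨r, hrq₁, hxs'⟩
  set σ : List X → P := fun s => if h : Good s then (key2 s h).choose else Q with hσ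
  refine ⟨Q, G.le_trans _ _ _ hQq₁ hq₁p, Or.inl ⟨σ, ?_, ?_⟩⟩
  · intro s
    rw [hσ]; dsimp only
    split
    · next h => exact ((key2 s h).choose_spec).1
    · exact ⟨G.le_refl Q, G.les_refl Q⟩
  · intro x hx
    have step : ∀ n, Good (preSeq x n) → x n ∈ A (preSeq x n) := by
      intro n hn
      have h1 := hx n
      rw [Stmt11Aux.preSeq_succ'] at h1
      have hσn : σ (preSeq x n) = (key2 _ hn).choose := by
        rw [hσ]; exact dif_pos hn
      rw [hσn] at h1
      exact ((key2 _ hn).choose_spec).2 _ h1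
    have hGoodAll : ∀ n, Good (preSeq x n) := by
      intro n
      induction n with
      | zero => intro k hk; simp [preSeq] at hk
      | succ n ih =>
        have hmem := step n ih
        intro k hk
        rw [Stmt11Aux.preSeq_length'] at hk
        have hrun : R (preSeq x (n+1)) =
            R (preSeq x n) ++ [Stmt11Aux.pickU G τ q₁ (R (preSeq x n)) (x n)] := by
          rw [Stmt11Aux.preSeq_succ']
          exact Stmt11Aux.run_append G τ q₁ _ _
        have hRlen : (R (preSeq x n)).length = n := by
          rw [hR, Stmt11Aux.run_length, Stmt11Aux.preSeq_length']
        rcases Nat.lt_or_ge k n with hkn | hkn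
        · rw [hrun, List.take_append_of_le_length (by omega),
            Stmt11Aux.preSeq_succ', List.getD_append _ _ _ _ (by rw [Stmt11Aux.preSeq_length']; omega)]
          exact ih k (by rw [Stmt11Aux.preSeq_length']; omega)
        · have hk' : k = n := by omega
          subst hk'
          rw [hrun, List.take_of_length_le (by simp [hRlen]),
            Stmt11Aux.pickU_spec G τ q₁ _ _ hmem, Stmt11Aux.preSeq_succ']
          have hcat := Stmt11Aux.getD_concat_length (preSeq x k) (x k) dX
          rw [Stmt11Aux.preSeq_length'] at hcat
          exact hcat.symm
    set f : ℕ → P := fun n => Stmt11Aux.pickU G τ q₁ (R (preSeq x n)) (x n) with hf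
    have hfle : ∀ n, G.le (f n) q₁ := fun n => Stmt11Aux.pickU_le G τ q₁ _ _
    have hmapf : ∀ n, (List.range n).map f = R (preSeq x n) := by
      intro n
      induction n with
      | zero => simp [preSeq, hR, Stmt11Aux.run_nil]
      | succ n ih =>
        rw [List.range_succ, List.map_append, ih, Stmt11Aux.preSeq_succ',
          hR, Stmt11Aux.run_append]
        simp [hf, hR]
    have hgOut : gOut τ f = x := by
      funext n
      show τ ((List.range (n+1)).map f) = x n
      rw [hmapf (n+1)]
      have hGn := hGoodAll (n+1) n (by rw [Stmt11Aux.preSeq_length']; omega)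
      rw [List.take_of_length_le
        (by rw [hR, Stmt11Aux.run_length, Stmt11Aux.preSeq_length'])] at hGn
      rw [hGn, List.getD_eq_getElem _ _ (by rw [Stmt11Aux.preSeq_length']; omega)]
      simp [preSeq]
    have hfin := (Hτ f hfle).2
    rwa [hgOut] at hfin
end

section
/- (Mathias–Silver theorem.) Let 𝒳 be an analytic subset of [ω]^ω, the set of infinite subsets of ω with the topology inherited from the Cantor space 2^ω. Then for every infinite M ⊆ ω there exists an infinite N ⊆ M such that either every infinite S ⊆ N belongs to 𝒳, or every infinite S ⊆ N belongs to the complement of 𝒳. -/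
open MeasureTheory Filter Topology TopologicalSpace

namespace SilverAux

open Set



open Set

/-- The Ellentuck space: infinite subsets of ℕ. -/
def ES : Type := {x : Set ℕ // x.Infinite}

/-- Basic Ellentuck cubes. -/
def ell (s : Finset ℕ) (A : Set ℕ) : Set ES := {x | ↑s ⊆ x.1 ∧ x.1 ⊆ ↑s ∪ A}

lemma ell_mono {s : Finset ℕ} {A B : Set ℕ} (h : B ⊆ A) : ell s B ⊆ ell s A :=
  fun x hx => ⟨hx.1, hx.2.trans (union_subset_union_right _ h)⟩

lemma ell_sub_of_mem {s : Finset ℕ} {A : Set ℕ} {x : ES} (hx : x ∈ ell s A) :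
    ell s (x.1 \ ↑s) ⊆ ell s A := by
  intro y hy
  refine ⟨hy.1, hy.2.trans ?_⟩
  intro a ha
  rcases ha with ha | ha
  · exact Or.inl ha
  · exact hx.2 ha.1

lemma mem_ell_diff {s : Finset ℕ} {x : ES} (h : ↑s ⊆ x.1) : x ∈ ell s (x.1 \ ↑s) := by
  refine ⟨h, fun a ha => ?_⟩
  by_cases h' : a ∈ (s : Set ℕ)
  · exact Or.inl h'
  · exact Or.inr ⟨ha, h'⟩

lemma ell_diff_anti {s s' : Finset ℕ} {x : ES} (hss' : s ⊆ s') (h' : ↑s' ⊆ x.1) :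
    ell s' (x.1 \ ↑s') ⊆ ell s (x.1 \ ↑s) := by
  intro y hy
  constructor
  · exact (Finset.coe_subset.2 hss').trans hy.1
  · refine hy.2.trans ?_
    intro a ha
    by_cases hs : a ∈ (s : Set ℕ)
    · exact Or.inl hs
    · rcases ha with ha | ha
      · exact Or.inr ⟨h' ha, hs⟩
      · exact Or.inr ⟨ha.1, hs⟩

instance : TopologicalSpace ES where
  IsOpen O := ∀ x ∈ O, ∃ s : Finset ℕ, ↑s ⊆ x.1 ∧ ell s (x.1 \ ↑s) ⊆ O
  isOpen_univ := fun x _ => ⟨∅, by simp, fun y _ => trivial⟩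
  isOpen_inter := by
    intro O₁ O₂ h₁ h₂ x hx
    obtain ⟨s₁, hs₁, hsub₁⟩ := h₁ x hx.1
    obtain ⟨s₂, hs₂, hsub₂⟩ := h₂ x hx.2
    refine ⟨s₁ ∪ s₂, by (push_cast); exact union_subset hs₁ hs₂, ?_⟩
    intro y hy
    have hc : (↑(s₁ ∪ s₂) : Set ℕ) ⊆ x.1 := by push_cast; exact union_subset hs₁ hs₂
    exact ⟨hsub₁ (ell_diff_anti Finset.subset_union_left hc hy),
      hsub₂ (ell_diff_anti Finset.subset_union_right hc hy)⟩
  isOpen_sUnion := by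
    intro 𝒮 h x hx
    obtain ⟨O, hO, hxO⟩ := hx
    obtain ⟨s, hs, hsub⟩ := h O hO x hxO
    exact ⟨s, hs, hsub.trans (subset_sUnion_of_mem hO)⟩

lemma isOpen_iff {O : Set ES} :
    IsOpen O ↔ ∀ x ∈ O, ∃ s : Finset ℕ, ↑s ⊆ x.1 ∧ ell s (x.1 \ ↑s) ⊆ O := Iff.rfl

lemma isOpen_ell (s : Finset ℕ) (A : Set ℕ) : IsOpen (ell s A) := by
  intro x hx
  exact ⟨s, hx.1, ell_sub_of_mem hx⟩

lemma ell_nonempty {s : Finset ℕ} {A : Set ℕ} (hA : A.Infinite) : (ell s A).Nonempty := by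
  refine ⟨⟨↑s ∪ A, (hA.mono subset_union_right : (↑s ∪ A : Set ℕ).Infinite)⟩, ?_, ?_⟩
  · exact subset_union_left
  · exact subset_rfl

/-- `O` absorbs the cube `[s, A]`. -/
def acc (O : Set ES) (s : Finset ℕ) (A : Set ℕ) : Prop := ell s A ⊆ O

/-- No infinite subcube of `[s, A]` is absorbed. -/
def rej (O : Set ES) (s : Finset ℕ) (A : Set ℕ) : Prop :=
  ∀ B ⊆ A, B.Infinite → ¬ acc O s B


/-- Generic fusion sequence builder. -/
lemma buildSeq (P : Finset ℕ → Set ℕ → Prop) (A0 : Set ℕ) (h0 : A0.Infinite) (hP0 : P ∅ A0)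
    (step : ∀ prev A, P prev A → A.Infinite →
      ∃ n ∈ A, ∃ A', A' ⊆ A ∩ Set.Ioi n ∧ A'.Infinite ∧ P (insert n prev) A') :
    ∃ (b : ℕ → ℕ) (As : ℕ → Set ℕ),
      StrictMono b ∧ (∀ k, (As k).Infinite) ∧ (∀ k, b k ∈ As k) ∧ As 0 = A0 ∧
      (∀ j k, j ≤ k → As k ⊆ As j) ∧
      (∀ k, P (Finset.image b (Finset.range k)) (As k)) ∧
      (∀ k, Set.range b ∩ Set.Ioi (b k) ⊆ As (k+1)) ∧ Set.range b ⊆ A0 := by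
  classical
  let St := {p : Finset ℕ × Set ℕ // P p.1 p.2 ∧ p.2.Infinite}
  have stepSt : ∀ q : St, ∃ n ∈ q.1.2, ∃ A', A' ⊆ q.1.2 ∩ Set.Ioi n ∧ A'.Infinite ∧
      P (insert n q.1.1) A' := fun q => step q.1.1 q.1.2 q.2.1 q.2.2
  choose nf Hn Af HA1 HA2 HA3 using stepSt
  let F : St → St := fun q => ⟨(insert (nf q) q.1.1, Af q), HA3 q, HA2 q⟩
  let seq : ℕ → St := fun k => F^[k] ⟨(∅, A0), hP0, h0⟩
  have hseq : ∀ k, seq (k+1) = F (seq k) := fun k => Function.iterate_succ_apply' F k _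
  let b : ℕ → ℕ := fun k => nf (seq k)
  let As : ℕ → Set ℕ := fun k => (seq k).1.2
  have hbmem : ∀ k, b k ∈ As k := fun k => Hn (seq k)
  have hsub : ∀ k, As (k+1) ⊆ As k ∩ Set.Ioi (b k) := by
    intro k
    have : As (k+1) = Af (seq k) := by
      show (seq (k+1)).1.2 = _
      rw [hseq k]
    rw [this]; exact HA1 (seq k)
  have hinf : ∀ k, (As k).Infinite := fun k => (seq k).2.2
  have hmono : ∀ j k, j ≤ k → As k ⊆ As j := by
    intro j k hjk
    induction k with
    | zero => simp_all
    | succ k ih =>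
      rcases Nat.lt_or_ge j (k+1) with h | h
      · exact ((hsub k).trans inter_subset_left).trans (ih (Nat.lt_succ_iff.1 h))
      · have : j = k + 1 := le_antisymm hjk h
        subst this; exact subset_rfl
  have hblt : ∀ k, b k < b (k+1) := by
    intro k
    have := (hsub k) (hbmem (k+1))
    exact this.2
  have hbmono : StrictMono b := strictMono_nat_of_lt_succ hblt
  have hprev : ∀ k, (seq k).1.1 = Finset.image b (Finset.range k) := by
    intro k
    induction k with
    | zero => simp [seq]
    | succ k ih =>
      have h1 : (seq (k+1)).1.1 = insert (b k) (seq k).1.1 := by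
        rw [hseq k]
      rw [h1, ih, Finset.range_add_one, Finset.image_insert]
  have hP : ∀ k, P (Finset.image b (Finset.range k)) (As k) := by
    intro k; have := (seq k).2.1; rwa [hprev k] at this
  have hA0 : As 0 = A0 := rfl
  have hrange : ∀ k, Set.range b ∩ Set.Ioi (b k) ⊆ As (k+1) := by
    rintro k a ⟨⟨j, rfl⟩, hj⟩
    have hjk : k < j := by
      by_contra h
      exact absurd (hbmono.le_iff_le.2 (not_lt.1 h)) (not_le.2 hj)
    exact hmono (k+1) j hjk (hbmem j)
  have hrA0 : Set.range b ⊆ A0 := by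
    rintro a ⟨j, rfl⟩
    exact hA0 ▸ hmono 0 j (Nat.zero_le j) (hbmem j)
  exact ⟨b, As, hbmono, hinf, hbmem, hA0, hmono, hP, hrange, hrA0⟩

variable {O : Set ES} {s : Finset ℕ} {A B : Set ℕ}

lemma acc_mono (h : B ⊆ A) (ha : acc O s A) : acc O s B := (ell_mono h).trans ha

lemma rej_mono (h : B ⊆ A) (hr : rej O s A) : rej O s B :=
  fun C hC hCi => hr C (hC.trans h) hCi

lemma not_rej_iff : ¬ rej O s A ↔ ∃ B ⊆ A, B.Infinite ∧ acc O s B := by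
  unfold rej
  push_neg
  rfl

/-- One-step spreading of rejection. -/
lemma rej_step (hA : A.Infinite) (h : rej O s A) :
    ∃ n ∈ A, ∃ A', A' ⊆ A ∩ Set.Ioi n ∧ A'.Infinite ∧ rej O (insert n s) A' := by
  classical
  by_contra hcon
  push_neg at hcon
  have hcon' : ∀ n ∈ A, ∀ A', A' ⊆ A ∩ Set.Ioi n → A'.Infinite →
      ∃ B, B ⊆ A' ∧ B.Infinite ∧ acc O (insert n s) B := by
    intro n hn A' h1 h2
    obtain ⟨B, h3, h4, h5⟩ := not_rej_iff.1 (hcon n hn A' h1 h2)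
    exact ⟨B, h3, h4, h5⟩
  -- build a diagonal sequence witnessing acceptance
  have hstep : ∀ (prev : Finset ℕ) (C : Set ℕ), (C ⊆ A ∧ ∀ n ∈ prev, acc O (insert n s) C) →
      C.Infinite →
      ∃ n ∈ C, ∃ A', A' ⊆ C ∩ Set.Ioi n ∧ A'.Infinite ∧
        (A' ⊆ A ∧ ∀ m ∈ insert n prev, acc O (insert m s) A') := by
    intro prev B hPB hBinf
    rcases hPB with ⟨hBA, hacc⟩
    set n := sInf B with hn
    have hnB : n ∈ B := Nat.sInf_mem hBinf.nonempty
    have h1 : B ∩ Set.Ioi n ⊆ A ∩ Set.Ioi n := inter_subset_inter_left _ hBA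
    have h2 : (B ∩ Set.Ioi n).Infinite := by
      have : B \ Set.Iic n ⊆ B ∩ Set.Ioi n := by
        intro a ha; exact ⟨ha.1, by simpa using ha.2⟩
      exact (hBinf.diff (finite_Iic n)).mono this
    obtain ⟨C, hC1, hC2, hC3⟩ := hcon' n (hBA hnB) (B ∩ Set.Ioi n) h1 h2
    refine ⟨n, hnB, C, hC1, hC2, ?_⟩
    constructor
    · exact (hC1.trans h1).trans inter_subset_left
    · intro m hm
      rcases Finset.mem_insert.1 hm with rfl | hm
      · exact hC3
      · exact acc_mono (hC1.trans inter_subset_left) (hacc m hm)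
  obtain ⟨b, As, hbmono, hinf, hbmem, hA0, hmono, hP, hrange, hrA0⟩ :=
    buildSeq (fun prev B => B ⊆ A ∧ ∀ n ∈ prev, acc O (insert n s) B) A hA
      ⟨subset_rfl, by simp⟩ hstep
  -- the range of b gives an accepted cube, contradiction
  · set D := Set.range b with hD
    have hDA : D ⊆ A := hrA0
    have hDinf : D.Infinite := infinite_range_of_injective hbmono.injective
    refine h D hDA hDinf ?_
    intro x hx
    have hxs : x.1 \ ↑s ⊆ D := by
      intro a ha
      rcases hx.2 ha.1 with h' | h'
      · exact absurd h' ha.2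
      · exact h'
    have hne : (x.1 \ ↑s).Nonempty := (x.2.diff (s.finite_toSet)).nonempty
    set m := sInf (x.1 \ ↑s) with hm
    have hmmem : m ∈ x.1 \ ↑s := Nat.sInf_mem hne
    obtain ⟨k, hk⟩ := hxs hmmem
    have hacck : acc O (insert (b k) s) (As (k+1)) := by
      have := (hP (k+1)).2 (b k) (by
        simp only [Finset.mem_image, Finset.mem_range]
        exact ⟨k, Nat.lt_succ_self k, rfl⟩)
      exact this
    have hxin : x ∈ ell (insert (b k) s) (D ∩ Set.Ioi (b k)) := by
      constructor
      · intro a ha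
        rcases Finset.mem_coe.1 ha |> Finset.mem_insert.1 with rfl | ha'
        · exact hk ▸ hmmem.1
        · exact hx.1 ha'
      · intro a ha
        by_cases has : a ∈ (s : Set ℕ)
        · exact Or.inl (by simp [has])
        · have haD : a ∈ x.1 \ ↑s := ⟨ha, has⟩
          have : m ≤ a := Nat.sInf_le haD
          rcases eq_or_lt_of_le this with rfl | hlt
          · exact Or.inl (by simp [hk])
          · exact Or.inr ⟨hxs haD, by rw [hk]; exact hlt⟩
    exact acc_mono (hrange k) hacck hxin

lemma inter_Ioi_infinite {A : Set ℕ} (hA : A.Infinite) (n : ℕ) : (A ∩ Set.Ioi n).Infinite := by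
  refine (hA.diff (finite_Iic n)).mono ?_
  intro a ha; exact ⟨ha.1, by simpa using ha.2⟩

/-- Spreading rejection to all one-point extensions along a single shrink. -/
lemma rej_extend (hA : A.Infinite) (h : rej O s A) :
    ∃ B ⊆ A, B.Infinite ∧ rej O s B ∧ ∀ n ∈ B, rej O (insert n s) (B ∩ Set.Ioi n) := by
  have hstep : ∀ (prev : Finset ℕ) (C : Set ℕ),
      (C ⊆ A ∧ rej O s C ∧ ∀ n ∈ prev, rej O (insert n s) C) → C.Infinite →
      ∃ n ∈ C, ∃ A', A' ⊆ C ∩ Set.Ioi n ∧ A'.Infinite ∧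
        (A' ⊆ A ∧ rej O s A' ∧ ∀ m ∈ insert n prev, rej O (insert m s) A') := by
    rintro prev C ⟨hCA, hrejC, hold⟩ hCinf
    obtain ⟨n, hn, A', h1, h2, h3⟩ := rej_step hCinf hrejC
    have hsub : A' ⊆ C := h1.trans inter_subset_left
    refine ⟨n, hn, A', h1, h2, hsub.trans hCA, rej_mono hsub hrejC, ?_⟩
    intro m hm
    rcases Finset.mem_insert.1 hm with rfl | hm
    · exact h3
    · exact rej_mono hsub (hold m hm)
  obtain ⟨b, As, hbmono, hinf, hbmem, hA0, hmono, hP, hrange, hrA0⟩ :=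
    buildSeq _ A hA ⟨subset_rfl, h, by simp⟩ hstep
  refine ⟨Set.range b, hrA0, infinite_range_of_injective hbmono.injective,
    rej_mono hrA0 h, ?_⟩
  rintro n ⟨k, rfl⟩
  have hmem : b k ∈ Finset.image b (Finset.range (k+1)) :=
    Finset.mem_image_of_mem b (Finset.self_mem_range_succ k)
  exact rej_mono (hrange k) ((hP (k+1)).2.2 (b k) hmem)

lemma rej_extend_list (us : List (Finset ℕ)) {A : Set ℕ} (hA : A.Infinite)
    (h : ∀ u ∈ us, rej O u A) :
    ∃ B ⊆ A, B.Infinite ∧ (∀ u ∈ us, rej O u B) ∧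
      ∀ u ∈ us, ∀ n ∈ B, rej O (insert n u) (B ∩ Set.Ioi n) := by
  induction us generalizing A with
  | nil => exact ⟨A, subset_rfl, hA, by simp, by simp⟩
  | cons u us ih =>
    obtain ⟨B₁, hB₁A, hB₁inf, hrejs, hext⟩ := ih hA (fun v hv => h v (List.mem_cons_of_mem _ hv))
    have hu : rej O u B₁ := rej_mono hB₁A (h u List.mem_cons_self)
    obtain ⟨B, hBB₁, hBinf, hrejB, hextB⟩ := rej_extend hB₁inf hu
    refine ⟨B, hBB₁.trans hB₁A, hBinf, ?_, ?_⟩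
    · intro v hv
      rcases List.mem_cons.1 hv with rfl | hv
      · exact hrejB
      · exact rej_mono hBB₁ (hrejs v hv)
    · intro v hv n hn
      rcases List.mem_cons.1 hv with rfl | hv
      · exact hextB n hn
      · exact rej_mono (inter_subset_inter_left _ hBB₁) (hext v hv n (hBB₁ hn))

lemma rej_fusion (hA : A.Infinite) (h : rej O s A) :
    ∃ B ⊆ A, B.Infinite ∧ rej O s B ∧
      ∀ t : Finset ℕ, ↑t ⊆ B → ∀ m ∈ t, (∀ i ∈ t, i ≤ m) →
        rej O (s ∪ t) (B ∩ Set.Ioi m) := by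
  classical
  have hstep : ∀ (prev : Finset ℕ) (C : Set ℕ), (∀ t ⊆ prev, rej O (s ∪ t) C) → C.Infinite →
      ∃ n ∈ C, ∃ A', A' ⊆ C ∩ Set.Ioi n ∧ A'.Infinite ∧
        (∀ t ⊆ insert n prev, rej O (s ∪ t) A') := by
    intro prev C hrejC hCinf
    have hall : ∀ u ∈ prev.powerset.toList.map (fun t => s ∪ t), rej O u C := by
      intro u hu
      simp only [List.mem_map, Finset.mem_toList, Finset.mem_powerset] at hu
      obtain ⟨t, ht, rfl⟩ := hu
      exact hrejC t ht
    obtain ⟨B, hBC, hBinf, hrejs, hext⟩ := rej_extend_list _ hCinf hall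
    set n := sInf B with hn
    have hnB : n ∈ B := Nat.sInf_mem hBinf.nonempty
    refine ⟨n, hBC hnB, B ∩ Set.Ioi n, inter_subset_inter_left _ hBC,
      inter_Ioi_infinite hBinf n, ?_⟩
    intro t ht
    have hmem : ∀ t' ⊆ prev, (s ∪ t') ∈ prev.powerset.toList.map (fun t => s ∪ t) := by
      intro t' ht'
      simp only [List.mem_map, Finset.mem_toList, Finset.mem_powerset]
      exact ⟨t', ht', rfl⟩
    by_cases hnt : n ∈ t
    · have ht' : t.erase n ⊆ prev := by
        intro a ha
        have h1 := Finset.mem_of_mem_erase ha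
        have h2 := (Finset.mem_erase.1 ha).1
        rcases Finset.mem_insert.1 (ht h1) with rfl | h'
        · exact absurd rfl h2
        · exact h'
      have hr := hext _ (hmem (t.erase n) ht') n hnB
      have heq : s ∪ t = insert n (s ∪ t.erase n) := by
        rw [← Finset.union_insert, Finset.insert_erase hnt]
      rw [heq]
      exact hr
    · have ht' : t ⊆ prev := by
        intro a ha
        rcases Finset.mem_insert.1 (ht ha) with rfl | h'
        · exact absurd ha hnt
        · exact h'
      exact rej_mono inter_subset_left (hrejs _ (hmem t ht'))
  have hP0 : ∀ t ⊆ (∅ : Finset ℕ), rej O (s ∪ t) A := by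
    intro t ht
    rw [Finset.subset_empty.1 ht, Finset.union_empty]
    exact h
  obtain ⟨b, As, hbmono, hinf, hbmem, hA0, hmono, hP, hrange, hrA0⟩ :=
    buildSeq (fun prev C => ∀ t ⊆ prev, rej O (s ∪ t) C) A hA hP0 hstep
  refine ⟨Set.range b, hrA0, infinite_range_of_injective hbmono.injective,
    rej_mono hrA0 h, ?_⟩
  intro t htB m hmt hmax
  obtain ⟨k, hk⟩ := htB hmt
  have htsub : t ⊆ Finset.image b (Finset.range (k+1)) := by
    intro a ha
    obtain ⟨j, hj⟩ := htB ha
    have : a ≤ b k := hk ▸ hmax a ha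
    have hjk : j ≤ k := hbmono.le_iff_le.1 (hj ▸ this)
    exact Finset.mem_image.2 ⟨j, Finset.mem_range.2 (Nat.lt_succ_of_le hjk), hj⟩
  have := hP (k+1) t htsub
  refine rej_mono ?_ this
  rw [← hk]
  exact hrange k

theorem open_ramsey {O : Set ES} (hO : IsOpen O) (s : Finset ℕ) {A : Set ℕ}
    (hA : A.Infinite) :
    ∃ B ⊆ A, B.Infinite ∧ (ell s B ⊆ O ∨ ell s B ∩ O = ∅) := by
  classical
  by_cases hrej : rej O s A
  · obtain ⟨B, hBA, hBinf, hrejB, hfus⟩ := rej_fusion hA hrej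
    refine ⟨B, hBA, hBinf, Or.inr ?_⟩
    by_contra hne
    obtain ⟨x, hxB, hxO⟩ := Set.nonempty_iff_ne_empty.2 hne
    obtain ⟨s₀, hs₀x, hs₀O⟩ := (isOpen_iff.1 hO) x hxO
    set k₀ := (s₀ ∪ s).sup id with hk₀
    have hk₀mem : ∀ a ∈ s₀ ∪ s, a ≤ k₀ := fun a ha => Finset.le_sup (f := id) ha
    have hsx : ↑s ⊆ x.1 := hxB.1
    have hfin : (x.1 ∩ Set.Iic k₀).Finite := (Set.finite_Iic k₀).subset inter_subset_right
    set s' := s ∪ hfin.toFinset with hs'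
    have hs'x : ↑s' ⊆ x.1 := by
      intro a ha
      rcases Finset.mem_coe.1 ha |> Finset.mem_union.1 with h' | h'
      · exact hsx h'
      · exact (hfin.mem_toFinset.1 h').1
    have hs₀s' : s₀ ⊆ s' := by
      intro a ha
      refine Finset.mem_union_right _ (hfin.mem_toFinset.2 ⟨hs₀x ha, ?_⟩)
      exact hk₀mem a (Finset.mem_union_left _ ha)
    have hss' : s ⊆ s' := Finset.subset_union_left
    have hacc : acc O s' (x.1 \ ↑s') := (ell_diff_anti hs₀s' hs'x).trans hs₀O
    have hxdiffB : x.1 \ ↑s ⊆ B := by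
      intro a ha
      rcases hxB.2 ha.1 with h' | h'
      · exact absurd h' ha.2
      · exact h'
    rcases Finset.eq_empty_or_nonempty (s' \ s) with h0 | hne'
    · have hs'eq : s' = s := Finset.Subset.antisymm (Finset.sdiff_eq_empty_iff_subset.1 h0) hss'
      rw [hs'eq] at hacc
      exact hrejB _ hxdiffB (x.2.diff s.finite_toSet) hacc
    · set m := (s' \ s).max' hne' with hm
      have hmmem : m ∈ s' \ s := Finset.max'_mem _ hne'
      have htB : ↑(s' \ s) ⊆ B := by
        intro a ha
        have ha' : a ∈ s' \ s := Finset.mem_coe.1 ha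
        exact hxdiffB ⟨hs'x (Finset.mem_coe.2 (Finset.mem_sdiff.1 ha').1),
          fun hc => (Finset.mem_sdiff.1 ha').2 (Finset.mem_coe.1 hc)⟩
      have hrejt := hfus (s' \ s) htB m hmmem (fun i hi => Finset.le_max' _ i hi)
      rw [Finset.union_sdiff_of_subset hss'] at hrejt
      have hmk₀ : m ≤ k₀ := by
        have := (Finset.mem_sdiff.1 hmmem).1
        rcases Finset.mem_union.1 this with h' | h'
        · exact absurd h' (Finset.mem_sdiff.1 hmmem).2
        · exact (hfin.mem_toFinset.1 h').2
      have hW : x.1 \ ↑s' ⊆ B ∩ Set.Ioi m := by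
        intro a ha
        have haB : a ∈ B := hxdiffB ⟨ha.1, fun hc => ha.2 (hss' (Finset.mem_coe.1 hc))⟩
        refine ⟨haB, ?_⟩
        by_contra hle
        have hak₀ : a ≤ k₀ := (not_lt.1 (by simpa using hle)).trans hmk₀
        exact ha.2 (Finset.mem_coe.2 (Finset.mem_union_right _
          (hfin.mem_toFinset.2 ⟨ha.1, hak₀⟩)))
      exact hrejt _ hW (x.2.diff s'.finite_toSet) hacc
  · obtain ⟨B, hBA, hBinf, haccB⟩ := not_rej_iff.1 hrej
    exact ⟨B, hBA, hBinf, Or.inl haccB⟩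

lemma nwd_avoid {N : Set ES} (hN : IsNowhereDense N) (s : Finset ℕ) {A : Set ℕ}
    (hA : A.Infinite) : ∃ B ⊆ A, B.Infinite ∧ ell s B ∩ N = ∅ := by
  obtain ⟨B, hBA, hBinf, hB⟩ :=
    open_ramsey (O := (closure N)ᶜ) (isOpen_compl_iff.2 isClosed_closure) s hA
  rcases hB with h | h
  · refine ⟨B, hBA, hBinf, ?_⟩
    rw [eq_empty_iff_forall_notMem]
    rintro x ⟨hx1, hx2⟩
    exact h hx1 (subset_closure hx2)
  · exfalso
    have hsub : ell s B ⊆ closure N := by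
      intro x hx
      by_contra hc
      exact (eq_empty_iff_forall_notMem.1 h x) ⟨hx, hc⟩
    obtain ⟨x, hx⟩ := ell_nonempty (s := s) hBinf
    have hmem : x ∈ interior (closure N) :=
      interior_maximal hsub (isOpen_ell s B) hx
    have h2 : interior (closure N) = ∅ := hN
    rw [h2] at hmem
    exact hmem

lemma nwd_avoid_finset (f : ℕ → Set ES) (hf : ∀ j, IsNowhereDense (f j))
    (F : Finset (Finset ℕ × ℕ)) {A : Set ℕ} (hA : A.Infinite) :
    ∃ B ⊆ A, B.Infinite ∧ ∀ p ∈ F, ell p.1 B ∩ f p.2 = ∅ := by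
  classical
  induction F using Finset.induction_on generalizing A with
  | empty => exact ⟨A, subset_rfl, hA, by simp⟩
  | insert p F hpF ih =>
    obtain ⟨B₁, h1, h2, h3⟩ := ih hA
    obtain ⟨B, h4, h5, h6⟩ := nwd_avoid (hf p.2) p.1 h2
    refine ⟨B, h4.trans h1, h5, ?_⟩
    intro q hq
    rcases Finset.mem_insert.1 hq with rfl | hq
    · exact h6
    · rw [eq_empty_iff_forall_notMem]
      rintro x ⟨hx1, hx2⟩
      exact (eq_empty_iff_forall_notMem.1 (h3 q hq) x) ⟨ell_mono h4 hx1, hx2⟩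

lemma meagre_avoid {N : Set ES} (hN : IsMeagre N) (s : Finset ℕ) {A : Set ℕ}
    (hA : A.Infinite) : ∃ B ⊆ A, B.Infinite ∧ ell s B ∩ N = ∅ := by
  classical
  obtain ⟨S, hSnwd, hScnt, hScov⟩ := isMeagre_iff_countable_union_isNowhereDense.1 hN
  have hex : ∃ f : ℕ → Set ES, (∀ j, IsNowhereDense (f j)) ∧ N ⊆ ⋃ j, f j := by
    rcases S.eq_empty_or_nonempty with rfl | hSne
    · exact ⟨fun _ => ∅, fun _ => isNowhereDense_empty, by simpa using hScov⟩
    · obtain ⟨f, hf⟩ := hScnt.exists_eq_range hSne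
      refine ⟨f, fun j => hSnwd _ (hf ▸ mem_range_self j), hScov.trans ?_⟩
      rw [hf, sUnion_range]
  obtain ⟨f, hfnwd, hfcov⟩ := hex
  obtain ⟨A₁, hA₁A, hA₁inf, hA₁⟩ := nwd_avoid (hfnwd 0) s hA
  have hstep : ∀ (prev : Finset ℕ) (C : Set ℕ),
      (∀ t ⊆ prev, ∀ j ≤ prev.card, ell (s ∪ t) C ∩ f j = ∅) → C.Infinite →
      ∃ n ∈ C, ∃ A', A' ⊆ C ∩ Set.Ioi n ∧ A'.Infinite ∧
        (∀ t ⊆ insert n prev, ∀ j ≤ (insert n prev).card, ell (s ∪ t) A' ∩ f j = ∅) := by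
    intro prev C _ hCinf
    set n := sInf C with hn
    have hnC : n ∈ C := Nat.sInf_mem hCinf.nonempty
    set F : Finset (Finset ℕ × ℕ) :=
      ((insert n prev).powerset ×ˢ Finset.range ((insert n prev).card + 1)).image
        (fun q => (s ∪ q.1, q.2)) with hF
    obtain ⟨B, hB1, hB2, hB3⟩ := nwd_avoid_finset f hfnwd F (inter_Ioi_infinite hCinf n)
    refine ⟨n, hnC, B, hB1, hB2, ?_⟩
    intro t ht j hj
    exact hB3 (s ∪ t, j) (Finset.mem_image.2 ⟨(t, j), Finset.mem_product.2
      ⟨Finset.mem_powerset.2 ht, Finset.mem_range.2 (Nat.lt_succ_of_le hj)⟩, rfl⟩)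
  have hP0 : ∀ t ⊆ (∅ : Finset ℕ), ∀ j ≤ (∅ : Finset ℕ).card, ell (s ∪ t) A₁ ∩ f j = ∅ := by
    intro t ht j hj
    rw [Finset.subset_empty.1 ht, Finset.union_empty]
    have hj0 : j = 0 := le_antisymm (by simpa using hj) (Nat.zero_le _)
    rw [hj0]
    exact hA₁
  obtain ⟨b, As, hbmono, hinf, hbmem, hA0, hmono, hP, hrange, hrA0⟩ :=
    buildSeq (fun prev C => ∀ t ⊆ prev, ∀ j ≤ prev.card, ell (s ∪ t) C ∩ f j = ∅)
      A₁ hA₁inf hP0 hstep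
  refine ⟨Set.range b, hrA0.trans hA₁A, infinite_range_of_injective hbmono.injective, ?_⟩
  rw [eq_empty_iff_forall_notMem]
  rintro x ⟨hxell, hxN⟩
  obtain ⟨j, hj⟩ := mem_iUnion.1 (hfcov hxN)
  have hxdiffB : x.1 \ ↑s ⊆ Set.range b := by
    intro a ha
    rcases hxell.2 ha.1 with h' | h'
    · exact absurd h' ha.2
    · exact h'
  have hfin : ((x.1 \ ↑s) ∩ Set.Iic (b j)).Finite := (finite_Iic (b j)).subset inter_subset_right
  set t := hfin.toFinset with htdef
  have htprev : t ⊆ Finset.image b (Finset.range (j+1)) := by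
    intro a ha
    have ha' := hfin.mem_toFinset.1 ha
    obtain ⟨i, hi⟩ := hxdiffB ha'.1
    have hik : i ≤ j := by
      refine hbmono.le_iff_le.1 ?_
      rw [hi]
      exact ha'.2
    exact Finset.mem_image.2 ⟨i, Finset.mem_range.2 (Nat.lt_succ_of_le hik), hi⟩
  have hcard : (Finset.image b (Finset.range (j+1))).card = j + 1 := by
    rw [Finset.card_image_of_injective _ hbmono.injective, Finset.card_range]
  have hjcard : j ≤ (Finset.image b (Finset.range (j+1))).card := by
    rw [hcard]; exact Nat.le_succ j
  have hempty := hP (j+1) t htprev j hjcard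
  apply eq_empty_iff_forall_notMem.1 hempty x
  refine ⟨⟨?_, ?_⟩, hj⟩
  · intro a ha
    rcases Finset.mem_coe.1 ha |> Finset.mem_union.1 with h' | h'
    · exact hxell.1 h'
    · exact (hfin.mem_toFinset.1 h').1.1
  · intro a ha
    by_cases has : a ∈ (↑s : Set ℕ)
    · exact Or.inl (Finset.mem_coe.2 (Finset.mem_union_left _ (Finset.mem_coe.1 has)))
    · have haB : a ∈ x.1 \ ↑s := ⟨ha, has⟩
      by_cases hle : a ≤ b j
      · exact Or.inl (Finset.mem_coe.2 (Finset.mem_union_right _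
          (hfin.mem_toFinset.2 ⟨haB, hle⟩)))
      · exact Or.inr (hrange j ⟨hxdiffB haB, by simpa using hle⟩)

theorem bp_ramsey {S : Set ES} (hS : BaireMeasurableSet S) (s : Finset ℕ) {A : Set ℕ}
    (hA : A.Infinite) :
    ∃ B ⊆ A, B.Infinite ∧ (ell s B ⊆ S ∨ ell s B ∩ S = ∅) := by
  obtain ⟨U, hU, heq⟩ := hS.residualEq_isOpen
  have hmeag : IsMeagre ((S \ U) ∪ (U \ S)) := by
    rw [IsMeagre]
    refine Filter.mem_of_superset heq ?_
    intro x hx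
    simp only [mem_compl_iff, mem_union, mem_diff]
    have hx' : (x ∈ S) = (x ∈ U) := hx
    rw [hx']
    tauto
  obtain ⟨B₁, h1, h2, h3⟩ := meagre_avoid hmeag s hA
  obtain ⟨B, h4, h5, h6⟩ := open_ramsey hU s h2
  have hd : ∀ x ∈ ell s B, ¬(x ∈ (S \ U) ∪ (U \ S)) := by
    intro x hx hc
    exact (eq_empty_iff_forall_notMem.1 h3 x) ⟨ell_mono h4 hx, hc⟩
  refine ⟨B, h4.trans h1, h5, ?_⟩
  rcases h6 with h | h
  · left
    intro x hx
    by_contra hxS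
    exact hd x hx (Or.inr ⟨h hx, hxS⟩)
  · right
    rw [eq_empty_iff_forall_notMem]
    rintro x ⟨hx, hxS⟩
    have hxU : x ∉ U := fun hc => (eq_empty_iff_forall_notMem.1 h x) ⟨hx, hc⟩
    exact hd x hx (Or.inl ⟨hxS, hxU⟩)


section Nikodym
variable {α : Type*} [TopologicalSpace α]

lemma open_empty_of_subset_closure {W T : Set α} (hW : IsOpen W) (h1 : W ⊆ closure T)
    (h2 : W ∩ T = ∅) : W = ∅ := by
  rw [eq_empty_iff_forall_notMem]
  intro x hx
  obtain ⟨y, hy⟩ := mem_closure_iff.1 (h1 hx) W hW hx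
  exact (eq_empty_iff_forall_notMem.1 h2 y) hy

lemma isNowhereDense_closure_diff {U : Set α} (hU : IsOpen U) :
    IsNowhereDense (closure U \ U) := by
  have hcl : IsClosed (closure U \ U) := isClosed_closure.sdiff hU
  rw [hcl.isNowhereDense_iff, eq_empty_iff_forall_notMem]
  intro x hx
  set W := interior (closure U \ U) with hW
  have hWopen : IsOpen W := isOpen_interior
  have hWsub : W ⊆ closure U \ U := interior_subset
  have h1 : W ⊆ closure U := hWsub.trans diff_subset
  have h2 : W ∩ U = ∅ := by
    rw [eq_empty_iff_forall_notMem]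
    rintro y ⟨hy1, hy2⟩
    exact (hWsub hy1).2 hy2
  have := open_empty_of_subset_closure hWopen h1 h2
  rw [this] at hx
  exact hx

lemma isMeagre_of_isNowhereDense {T : Set α} (h : IsNowhereDense T) : IsMeagre T :=
  isMeagre_iff_countable_union_isNowhereDense.2
    ⟨{T}, by simpa using h, countable_singleton T, by simp⟩

/-- Banach category theorem. -/
lemma banach_category (Z : Set α) :
    IsMeagre (Z ∩ ⋃₀ {U : Set α | IsOpen U ∧ IsMeagre (U ∩ Z)}) := by
  classical
  set 𝒮 := {𝒱 : Set (Set α) |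
    (∀ V ∈ 𝒱, IsOpen V ∧ V.Nonempty ∧ IsMeagre (V ∩ Z)) ∧ 𝒱.PairwiseDisjoint id} with h𝒮
  have hchaincond : ∀ c ⊆ 𝒮, IsChain (· ⊆ ·) c → ∃ ub ∈ 𝒮, ∀ s ∈ c, s ⊆ ub := by
    intro c hc hchain
    refine ⟨⋃₀ c, ⟨?_, ?_⟩, fun t ht => subset_sUnion_of_mem ht⟩
    · rintro V ⟨𝒱₀, h𝒱₀, hV⟩
      exact (hc h𝒱₀).1 V hV
    · intro V hV V' hV' hne
      obtain ⟨𝒱₁, h𝒱₁, hV1⟩ := hV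
      obtain ⟨𝒱₂, h𝒱₂, hV2⟩ := hV'
      rcases hchain.total h𝒱₁ h𝒱₂ with h | h
      · exact (hc h𝒱₂).2 (h hV1) hV2 hne
      · exact (hc h𝒱₁).2 hV1 (h hV2) hne
  obtain ⟨𝒱, hmax⟩ := zorn_subset 𝒮 hchaincond
  obtain ⟨h𝒱, hdisj⟩ := hmax.prop
  -- (1) every member of the family is inside the closure of ⋃₀ 𝒱
  have hclosure : ⋃₀ {U : Set α | IsOpen U ∧ IsMeagre (U ∩ Z)} ⊆ closure (⋃₀ 𝒱) := by
    rintro x ⟨U, ⟨hUopen, hUmeag⟩, hxU⟩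
    by_contra hxcl
    set V' := U ∩ (closure (⋃₀ 𝒱))ᶜ with hV'
    have hV'open : IsOpen V' := hUopen.inter isClosed_closure.isOpen_compl
    have hV'ne : V'.Nonempty := ⟨x, hxU, hxcl⟩
    have hV'meag : IsMeagre (V' ∩ Z) := hUmeag.mono (inter_subset_inter_left _ inter_subset_left)
    have hins : insert V' 𝒱 ∈ 𝒮 := by
      constructor
      · rintro V (rfl | hV)
        · exact ⟨hV'open, hV'ne, hV'meag⟩
        · exact h𝒱 V hV
      · rw [Set.pairwiseDisjoint_insert]
        refine ⟨hdisj, fun V hV _ => ?_⟩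
        rw [Set.disjoint_iff_inter_eq_empty]
        rw [eq_empty_iff_forall_notMem]
        rintro y ⟨hy1, hy2⟩
        exact hy1.2 (subset_closure (Set.mem_sUnion.2 ⟨V, hV, hy2⟩))
    have hVmem : V' ∈ 𝒱 := hmax.2 hins (subset_insert _ _) (mem_insert _ _)
    obtain ⟨y, hy⟩ := hV'ne
    exact hy.2 (subset_closure (Set.mem_sUnion.2 ⟨V', hVmem, hy⟩))
  -- (2) choose nwd decompositions
  have hFex : ∀ V : Set α, ∃ F : ℕ → Set α, (∀ n, IsNowhereDense (F n)) ∧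
      (V ∈ 𝒱 → V ∩ Z ⊆ ⋃ n, F n) := by
    intro V
    by_cases hV : V ∈ 𝒱
    · obtain ⟨S, hSnwd, hScnt, hScov⟩ :=
        isMeagre_iff_countable_union_isNowhereDense.1 (h𝒱 V hV).2.2
      rcases S.eq_empty_or_nonempty with rfl | hSne
      · exact ⟨fun _ => ∅, fun _ => isNowhereDense_empty, fun _ => by simpa using hScov⟩
      · obtain ⟨f, hf⟩ := hScnt.exists_eq_range hSne
        exact ⟨f, fun n => hSnwd _ (hf ▸ mem_range_self n),
          fun _ => hScov.trans (by rw [hf, sUnion_range])⟩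
    · exact ⟨fun _ => ∅, fun _ => isNowhereDense_empty, fun h => absurd h hV⟩
  choose F hFnwd hFcov using hFex
  set T : ℕ → Set α := fun n => ⋃ V ∈ 𝒱, V ∩ F V n with hT
  have hTnwd : ∀ n, IsNowhereDense (T n) := by
    intro n
    rw [IsNowhereDense, eq_empty_iff_forall_notMem]
    intro x hx
    set W := interior (closure (T n)) with hWdef
    have hWopen : IsOpen W := isOpen_interior
    have hWcl : W ⊆ closure (T n) := interior_subset
    have hWne : W.Nonempty := ⟨x, hx⟩
    by_cases hcase : ∃ V ∈ 𝒱, (W ∩ V).Nonempty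
    · obtain ⟨V, hV, hWV⟩ := hcase
      have hWVopen : IsOpen (W ∩ V) := hWopen.inter (h𝒱 V hV).1
      -- shrink away from closure (F V n)
      have hnotsub : ¬ (W ∩ V ⊆ closure (F V n)) := by
        intro hsub
        have : W ∩ V ⊆ interior (closure (F V n)) := interior_maximal hsub hWVopen
        rw [hFnwd V n] at this
        exact this hWV.some_mem
      obtain ⟨y, hyWV, hycl⟩ := not_subset.1 hnotsub
      set W' := (W ∩ V) ∩ (closure (F V n))ᶜ with hW'
      have hW'open : IsOpen W' := hWVopen.inter isClosed_closure.isOpen_compl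
      have hW'ne : W'.Nonempty := ⟨y, hyWV, hycl⟩
      have hW'T : W' ∩ T n = ∅ := by
        rw [eq_empty_iff_forall_notMem]
        rintro z ⟨hzW', hzT⟩
        obtain ⟨V', hV', hzV', hzF⟩ := by
          simpa only [hT, mem_iUnion, exists_prop] using hzT
        rcases eq_or_ne V' V with rfl | hne
        · exact hzW'.2 (subset_closure hzF)
        · exact Set.disjoint_left.1 (hdisj hV' hV hne) hzV' hzW'.1.2
      have := open_empty_of_subset_closure hW'open
        ((inter_subset_left.trans inter_subset_left).trans hWcl) hW'T
      rw [this] at hW'ne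
      exact hW'ne.ne_empty rfl
    · have hWT : W ∩ T n = ∅ := by
        rw [eq_empty_iff_forall_notMem]
        rintro z ⟨hzW, hzT⟩
        obtain ⟨V', hV', hzV', _⟩ := by
          simpa only [hT, mem_iUnion, exists_prop] using hzT
        exact hcase ⟨V', hV', z, hzW, hzV'⟩
      have := open_empty_of_subset_closure hWopen hWcl hWT
      rw [this] at hWne
      exact hWne.ne_empty rfl
  -- (3) conclude
  have hsub : Z ∩ ⋃₀ {U : Set α | IsOpen U ∧ IsMeagre (U ∩ Z)} ⊆
      (⋃ n, T n) ∪ (closure (⋃₀ 𝒱) \ ⋃₀ 𝒱) := by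
    rintro x ⟨hxZ, hxU⟩
    have hxcl : x ∈ closure (⋃₀ 𝒱) := hclosure hxU
    by_cases hx𝒱 : x ∈ ⋃₀ 𝒱
    · obtain ⟨V, hV, hxV⟩ := hx𝒱
      obtain ⟨n, hn⟩ := mem_iUnion.1 (hFcov V hV ⟨hxV, hxZ⟩)
      exact Or.inl (mem_iUnion.2 ⟨n, mem_iUnion₂.2 ⟨V, hV, hxV, hn⟩⟩)
    · exact Or.inr ⟨hxcl, hx𝒱⟩
  refine (?_ : IsMeagre _).mono hsub
  have hm1 : IsMeagre (⋃ n, T n) :=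
    isMeagre_iUnion (fun n => isMeagre_of_isNowhereDense (hTnwd n))
  have hm2 : IsMeagre (closure (⋃₀ 𝒱) \ ⋃₀ 𝒱) :=
    isMeagre_of_isNowhereDense
      (isNowhereDense_closure_diff (isOpen_sUnion (fun V hV => (h𝒱 V hV).1)))
  rw [IsMeagre, compl_union]
  exact Filter.inter_mem hm1 hm2

/-- Baire-property hull: every set has a Baire measurable envelope that is minimal
modulo meager sets. -/
lemma exists_hull (Z : Set α) : ∃ H : Set α, Z ⊆ H ∧ BaireMeasurableSet H ∧
    ∀ W, BaireMeasurableSet W → W ⊆ H \ Z → IsMeagre W := by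
  classical
  set G := ⋃₀ {U : Set α | IsOpen U ∧ IsMeagre (U ∩ Z)} with hG
  have hGopen : IsOpen G := isOpen_sUnion (fun U hU => hU.1)
  refine ⟨Z ∪ Gᶜ, subset_union_left, ?_, ?_⟩
  · have h1 : BaireMeasurableSet (Gᶜ : Set α) := hGopen.baireMeasurableSet.compl
    have h2 : BaireMeasurableSet (Z ∩ G) := (banach_category Z).baireMeasurableSet
    have heq : Z ∪ Gᶜ = (Z ∩ G) ∪ Gᶜ := by
      ext x
      by_cases hx : x ∈ G <;> simp [hx]
    rw [heq]
    exact h2.union h1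
  · intro W hW hWsub
    obtain ⟨U, hUopen, hUeq⟩ := hW.residualEq_isOpen
    have hmeagD : IsMeagre ((W \ U) ∪ (U \ W)) := by
      rw [IsMeagre]
      refine Filter.mem_of_superset hUeq ?_
      intro x hx
      have hx' : (x ∈ W) = (x ∈ U) := hx
      simp only [mem_compl_iff, mem_union, mem_diff]
      rw [hx']
      tauto
    have hWZ : ∀ x ∈ W, x ∉ Z := fun x hx => (hWsub hx).2
    have hUZ : IsMeagre (U ∩ Z) := by
      refine hmeagD.mono ?_
      rintro x ⟨hxU, hxZ⟩
      by_cases hxW : x ∈ W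
      · exact absurd hxZ (hWZ x hxW)
      · exact Or.inr ⟨hxU, hxW⟩
    have hUG : U ⊆ G := subset_sUnion_of_mem ⟨hUopen, hUZ⟩
    have hWGc : W ⊆ Gᶜ := by
      intro x hx
      rcases (hWsub hx).1 with h | h
      · exact absurd h (hWsub hx).2
      · exact h
    have hWdiff : W ⊆ W \ U := by
      intro x hx
      exact ⟨hx, fun hxU => (hWGc hx) (hUG hxU)⟩
    exact hmeagD.mono (hWdiff.trans subset_union_left)

/-- Baire measurable sets are closed under the Souslin operation. -/
theorem souslin_baireMeasurable (A : List ℕ → Set α) (hA : ∀ t, BaireMeasurableSet (A t)) :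
    BaireMeasurableSet {x | ∃ f : ℕ → ℕ, ∀ n, x ∈ A (List.ofFn fun i : Fin n => f i)} := by
  classical
  set AA : List ℕ → Set α := fun t => ⋂ k ∈ Finset.range (t.length + 1), A (t.take k) with hAA
  have hAAbm : ∀ t, BaireMeasurableSet (AA t) :=
    fun t => BaireMeasurableSet.biInter (Finset.range _).countable_toSet (fun k _ => hA _)
  have hAA_A : ∀ t, AA t ⊆ A t := by
    intro t x hx
    have h := mem_iInter₂.1 hx t.length (Finset.mem_range.2 (Nat.lt_succ_self _))
    simpa using h
  have hAA_app : ∀ t m, AA (t ++ [m]) ⊆ AA t := by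
    intro t m x hx
    refine mem_iInter₂.2 (fun k hk => ?_)
    have hk' : k ≤ t.length := Nat.lt_succ_iff.1 (Finset.mem_range.1 hk)
    have h := mem_iInter₂.1 hx k (Finset.mem_range.2 (by simp; omega))
    rwa [List.take_append_of_le_length hk'] at h
  set seqL : (ℕ → ℕ) → ℕ → List ℕ := fun f n => List.ofFn fun i : Fin n => f i with hseqL
  have hseqL_succ : ∀ (f : ℕ → ℕ) (n : ℕ), seqL f (n+1) = seqL f n ++ [f n] := by
    intro f n
    show List.ofFn (fun i : Fin (n+1) => f i) = List.ofFn (fun i : Fin n => f i) ++ [f n]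
    rw [List.ofFn_succ', List.concat_eq_append]
    rfl
  have hseqL_cons : ∀ (f : ℕ → ℕ) (n : ℕ),
      seqL f (n+1) = f 0 :: seqL (fun k => f (k+1)) n := by
    intro f n
    simp [hseqL, List.ofFn_succ]
  have hseqL_len : ∀ (f : ℕ → ℕ) (n : ℕ), (seqL f n).length = n := by
    intro f n; simp [hseqL]
  have hseqL_take : ∀ (f : ℕ → ℕ) (n k : ℕ), k ≤ n → (seqL f n).take k = seqL f k := by
    intro f n
    induction n with
    | zero =>
      intro k hk
      have : k = 0 := Nat.le_zero.1 hk
      subst this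
      simp [hseqL]
    | succ n ih =>
      intro k hk
      rcases Nat.lt_or_ge k (n+1) with h | h
      · rw [hseqL_succ, List.take_append_of_le_length (by rw [hseqL_len]; omega),
          ih k (by omega)]
      · have hkn : k = n + 1 := by omega
        subst hkn
        exact List.take_of_length_le (le_of_eq (hseqL_len f (n+1)))
  set St : List ℕ → Set α := fun t => {x | ∃ f : ℕ → ℕ, ∀ n, x ∈ AA (t ++ seqL f n)} with hSt
  have hSt_sub : ∀ t, St t ⊆ AA t := by
    rintro t x ⟨f, hf⟩
    have := hf 0
    simpa [hseqL] using this
  have hSt_union : ∀ t, St t = ⋃ m, St (t ++ [m]) := by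
    intro t
    ext x
    constructor
    · rintro ⟨f, hf⟩
      refine mem_iUnion.2 ⟨f 0, ⟨fun k => f (k+1), fun n => ?_⟩⟩
      have h := hf (n+1)
      rw [hseqL_cons] at h
      rwa [show t ++ f 0 :: seqL (fun k => f (k+1)) n
        = (t ++ [f 0]) ++ seqL (fun k => f (k+1)) n by simp] at h
    · intro hx
      obtain ⟨m, f, hf⟩ := mem_iUnion.1 hx
      have hcons_eq : ∀ n, seqL (fun j => Nat.casesOn j m f) (n+1) = m :: seqL f n := by
        intro n
        rw [hseqL_cons]
        rfl
      refine ⟨fun j => Nat.casesOn j m f, fun n => ?_⟩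
      cases n with
      | zero =>
        have h := hf 0
        simp only [hseqL, List.ofFn_zero, List.append_nil] at h ⊢
        exact hAA_app t m h
      | succ k =>
        rw [hcons_eq, show t ++ m :: seqL f k = (t ++ [m]) ++ seqL f k by simp]
        exact hf k
  choose Hull hHsub hHbm hHmin using fun Z : Set α => exists_hull Z
  set H : List ℕ → Set α := fun t => Hull (St t) ∩ AA t with hH
  have hHbm' : ∀ t, BaireMeasurableSet (H t) := fun t => (hHbm _).inter (hAAbm t)
  have hStH : ∀ t, St t ⊆ H t := fun t => subset_inter (hHsub _) (hSt_sub t)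
  set W : List ℕ → Set α := fun t => H t \ ⋃ m, H (t ++ [m]) with hW
  have hWmeag : ∀ t, IsMeagre (W t) := by
    intro t
    refine hHmin (St t) _ ((hHbm' t).diff (BaireMeasurableSet.iUnion
      (fun m => hHbm' (t ++ [m])))) ?_
    rintro x ⟨hx1, hx2⟩
    refine ⟨hx1.1, fun hxSt => ?_⟩
    rw [hSt_union] at hxSt
    obtain ⟨m, hm⟩ := mem_iUnion.1 hxSt
    exact hx2 (mem_iUnion.2 ⟨m, hStH _ hm⟩)
  have hMmeag : IsMeagre (⋃ t : List ℕ, W t) := by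
    have e : ℕ ≃ List ℕ := (Denumerable.eqv (List ℕ)).symm
    have heq : (⋃ n : ℕ, W (e n)) = ⋃ t : List ℕ, W t := e.surjective.iUnion_comp W
    rw [← heq]
    exact isMeagre_iUnion (fun n => hWmeag (e n))
  have hmain : {x | ∃ f : ℕ → ℕ, ∀ n, x ∈ A (List.ofFn fun i : Fin n => f i)} = St [] := by
    ext x
    simp only [hSt, mem_setOf_eq, List.nil_append]
    constructor
    · rintro ⟨f, hf⟩
      refine ⟨f, fun n => mem_iInter₂.2 (fun k hk => ?_)⟩
      have hkn : k ≤ n := by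
        have := Finset.mem_range.1 hk
        rw [hseqL_len] at this
        omega
      rw [hseqL_take f n k hkn]
      exact hf k
    · rintro ⟨f, hf⟩
      exact ⟨f, fun n => hAA_A _ (hf n)⟩
  have hrec : ∀ x, x ∈ H [] → x ∉ (⋃ t : List ℕ, W t) →
      ∃ f : ℕ → ℕ, ∀ n, x ∈ A (seqL f n) := by
    intro x hx hxM
    have hstep : ∀ t, x ∈ H t → ∃ m, x ∈ H (t ++ [m]) := by
      intro t hxt
      by_contra hc
      push_neg at hc
      exact hxM (mem_iUnion.2 ⟨t, hxt, fun hm => by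
        obtain ⟨m, hm'⟩ := mem_iUnion.1 hm
        exact hc m hm'⟩)
    choose stepf hstepf using hstep
    let c : ℕ → {t : List ℕ // x ∈ H t} := fun n =>
      Nat.rec ⟨[], hx⟩ (fun _ p => ⟨p.1 ++ [stepf p.1 p.2], hstepf p.1 p.2⟩) n
    let f : ℕ → ℕ := fun n => stepf (c n).1 (c n).2
    have hcsucc : ∀ n, (c (n+1)).1 = (c n).1 ++ [f n] := fun n => rfl
    have hclist : ∀ n, (c n).1 = seqL f n := by
      intro n
      induction n with
      | zero => simp [hseqL, c]
      | succ n ih => rw [hcsucc, ih, ← hseqL_succ]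
    refine ⟨f, fun n => ?_⟩
    have hmem := (c n).2
    rw [hclist n] at hmem
    exact hAA_A _ hmem.2
  rw [hmain]
  refine (hHbm' []).congr ?_
  refine Filter.mem_of_superset hMmeag ?_
  intro x hx
  simp only [mem_setOf_eq]
  apply propext
  constructor
  · intro h1
    have h2 : x ∈ {x | ∃ f : ℕ → ℕ, ∀ n, x ∈ A (List.ofFn fun i : Fin n => f i)} :=
      hrec x h1 hx
    rw [hmain] at h2
    exact h2
  · exact fun h => hStH [] h

end Nikodym
section Glue

/-- Cylinder set in Baire space determined by a finite sequence. -/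
def cylSet (t : List ℕ) : Set (ℕ → ℕ) := {f | ∀ i, (h : i < t.length) → f i = t[i]}

lemma self_mem_cylSet (h : ℕ → ℕ) (n : ℕ) : h ∈ cylSet (List.ofFn fun i : Fin n => h i) := by
  intro i hi
  simp [List.getElem_ofFn]

lemma cyl_basis {g : (ℕ → ℕ) → (ℕ → Bool)} (hg : Continuous g) (f : ℕ → ℕ)
    {V : Set (ℕ → Bool)} (hV : V ∈ nhds (g f)) :
    ∃ n : ℕ, ∀ f' : ℕ → ℕ, (∀ i < n, f' i = f i) → g f' ∈ V := by
  have h1 : g ⁻¹' V ∈ nhds f := hg.continuousAt.preimage_mem_nhds hV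
  rw [nhds_pi, Filter.mem_pi] at h1
  obtain ⟨I, hIfin, u, hu, hsub⟩ := h1
  rcases I.eq_empty_or_nonempty with rfl | hIne
  · exact ⟨0, fun f' _ => hsub (fun i hi => absurd hi (notMem_empty i))⟩
  obtain ⟨n, hn⟩ := hIfin.bddAbove
  refine ⟨n + 1, fun f' hf' => ?_⟩
  refine hsub (fun i hi => ?_)
  have : i ≤ n := hn hi
  rw [hf' i (by omega)]
  exact mem_of_mem_nhds (hu i)

lemma analytic_scheme {𝒳 : Set (ℕ → Bool)} {g : (ℕ → ℕ) → (ℕ → Bool)}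
    (hgcont : Continuous g) (hgrange : Set.range g = 𝒳) (y : ℕ → Bool) :
    y ∈ 𝒳 ↔ ∃ h : ℕ → ℕ, ∀ n, y ∈ closure (g '' cylSet (List.ofFn fun i : Fin n => h i)) := by
  constructor
  · rintro hy
    rw [← hgrange] at hy
    obtain ⟨f, rfl⟩ := hy
    exact ⟨f, fun n => subset_closure ⟨f, self_mem_cylSet f n, rfl⟩⟩
  · rintro ⟨h, hh⟩
    have hy : y = g h := by
      funext k
      set V : Set (ℕ → Bool) := (fun z : ℕ → Bool => z k) ⁻¹' {g h k} with hVdef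
      have hVopen : IsOpen V :=
        (isOpen_discrete ({g h k} : Set Bool)).preimage (continuous_apply k)
      have hVclosed : IsClosed V :=
        (isClosed_discrete ({g h k} : Set Bool)).preimage (continuous_apply k)
      have hVnhds : V ∈ nhds (g h) := hVopen.mem_nhds rfl
      obtain ⟨n, hn⟩ := cyl_basis hgcont h hVnhds
      have himg : g '' cylSet (List.ofFn fun i : Fin n => h i) ⊆ V := by
        rintro z ⟨f', hf', rfl⟩
        refine hn f' (fun i hi => ?_)
        have h2 := hf' i (by simpa using hi)
        rw [h2]
        simp [List.getElem_ofFn]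
      exact (closure_minimal himg hVclosed) (hh n)
    rw [hy, ← hgrange]
    exact mem_range_self h

/-- The canonical map from the Ellentuck space to Cantor space. -/
noncomputable def kappa (x : ES) : ℕ → Bool :=
  fun n => @decide (n ∈ x.1) (Classical.propDecidable _)

lemma kappa_eq_true_iff {x : ES} {n : ℕ} : kappa x n = true ↔ n ∈ x.1 := by
  simp [kappa]

lemma isOpen_mem_ES (n : ℕ) : IsOpen {x : ES | n ∈ x.1} := by
  intro x hx
  refine ⟨{n}, by simpa using hx, ?_⟩
  intro y hy
  exact hy.1 (by simp)

lemma isOpen_not_mem_ES (n : ℕ) : IsOpen {x : ES | n ∉ x.1} := by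
  intro x hx
  refine ⟨∅, by simp, ?_⟩
  intro y hy hny
  have := hy.2 hny
  simp only [Finset.coe_empty, empty_union, mem_diff] at this
  exact hx this.1

lemma continuous_kappa : Continuous kappa := by
  apply continuous_pi
  intro n
  rw [continuous_discrete_rng]
  intro b
  cases b
  · have h : (fun x => kappa x n) ⁻¹' {false} = {x : ES | n ∉ x.1} := by
      ext x
      simp [kappa]
    rw [h]
    exact isOpen_not_mem_ES n
  · have h : (fun x => kappa x n) ⁻¹' {true} = {x : ES | n ∈ x.1} := by
      ext x
      simp [kappa]
    rw [h]
    exact isOpen_mem_ES n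

lemma mem_ell_empty {B : Set ℕ} {x : ES} : x ∈ ell ∅ B ↔ x.1 ⊆ B := by
  constructor
  · intro h a ha
    rcases h.2 ha with h' | h'
    · simp at h'
    · exact h'
  · intro h
    exact ⟨by simp, fun a ha => Or.inr (h ha)⟩

theorem silver_main (𝒳 : Set (ℕ → Bool)) (hA : MeasureTheory.AnalyticSet 𝒳)
    (M : Set ℕ) (hM : M.Infinite) :
    ∃ N : Set ℕ, N ⊆ M ∧ N.Infinite ∧
      ((∀ x : ES, x.1 ⊆ N → kappa x ∈ 𝒳) ∨ (∀ x : ES, x.1 ⊆ N → kappa x ∉ 𝒳)) := by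
  rw [MeasureTheory.AnalyticSet] at hA
  rcases hA with rfl | ⟨g, hgcont, hgrange⟩
  · exact ⟨M, subset_rfl, hM, Or.inr (fun x _ h => h)⟩
  set C : List ℕ → Set (ℕ → Bool) := fun t => closure (g '' cylSet t) with hC
  set SX : Set ES := kappa ⁻¹' 𝒳 with hSX
  have hSXeq : SX = {x : ES | ∃ h : ℕ → ℕ, ∀ n,
      x ∈ (fun t => kappa ⁻¹' C t) (List.ofFn fun i : Fin n => h i)} := by
    ext x
    exact analytic_scheme hgcont hgrange (kappa x)
  have hSXbm : BaireMeasurableSet SX := by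
    rw [hSXeq]
    refine souslin_baireMeasurable (fun t => kappa ⁻¹' C t) (fun t => ?_)
    have hcl : IsClosed (kappa ⁻¹' C t) := isClosed_closure.preimage continuous_kappa
    exact (hcl.isOpen_compl.baireMeasurableSet).of_compl
  obtain ⟨B, hBM, hBinf, hB⟩ := bp_ramsey hSXbm ∅ hM
  refine ⟨B, hBM, hBinf, ?_⟩
  rcases hB with h | h
  · exact Or.inl (fun x hx => h (mem_ell_empty.2 hx))
  · refine Or.inr (fun x hx hxin => ?_)
    exact (eq_empty_iff_forall_notMem.1 h x) ⟨mem_ell_empty.2 hx, hxin⟩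

end Glue

end SilverAux

theorem stmt12 (𝒳 : Set (ℕ → Bool)) (hA : MeasureTheory.AnalyticSet 𝒳)
    (M : Set ℕ) (hM : M.Infinite) :
    ∃ N : Set ℕ, N ⊆ M ∧ N.Infinite ∧
      ((∀ S : ℕ → Bool, {n | S n = true}.Infinite → {n | S n = true} ⊆ N → S ∈ 𝒳) ∨
       (∀ S : ℕ → Bool, {n | S n = true}.Infinite → {n | S n = true} ⊆ N → S ∉ 𝒳)) := by
  obtain ⟨N, hNM, hNinf, hN⟩ := SilverAux.silver_main 𝒳 hA M hM
  refine ⟨N, hNM, hNinf, ?_⟩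
  have key : ∀ (S : ℕ → Bool) (hS : {n | S n = true}.Infinite),
      SilverAux.kappa ⟨{n | S n = true}, hS⟩ = S := by
    intro S hS
    funext n
    by_cases h : S n = true
    · rw [h]; exact SilverAux.kappa_eq_true_iff.2 h
    · have h2 : S n = false := by
        cases hnn : S n
        · rfl
        · exact absurd hnn h
      rw [h2]
      have hnt : ¬ (SilverAux.kappa (⟨{n | S n = true}, hS⟩ : SilverAux.ES) n = true) := by
        exact fun hc => h (SilverAux.kappa_eq_true_iff.1 hc)
      cases hk : SilverAux.kappa (⟨{n | S n = true}, hS⟩ : SilverAux.ES) n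
      · rfl
      · exact absurd hk hnt
  rcases hN with h | h
  · refine Or.inl (fun S hS hsub => ?_)
    have := h ⟨{n | S n = true}, hS⟩ hsub
    rwa [key S hS] at this
  · refine Or.inr (fun S hS hsub => ?_)
    have := h ⟨{n | S n = true}, hS⟩ hsub
    rwa [key S hS] at this
end

section
/- Let G = (P, X, d, ≤, ≤*, ◁) be an approximate Gowers space satisfying the pigeonhole principle. Let 𝒳 ⊆ X^ω, p ∈ P, and Δ = (Δ_n) be a sequence of positive reals. If player II has a strategy in Gowers' game G_p to reach 𝒳, then there exists q ≤ p such that player I has a strategy in the asymptotic game F_q to reach (𝒳)_Δ. -/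
open MeasureTheory Filter Topology TopologicalSpace

/-! ## Approximate Gowers spaces -/

structure ApproxGowersSpace (P : Type*) (X : Type*) where
  le : P → P → Prop
  les : P → P → Prop
  tri : X → P → Prop
  le_refl : ∀ p, le p p
  le_trans : ∀ p q r, le p q → le q r → le p r
  les_refl : ∀ p, les p p
  les_trans : ∀ p q r, les p q → les q r → les p r
  le_imp_les : ∀ p q, le p q → les p q
  diag : ∀ p q, les p q → ∃ r, le r p ∧ le r q ∧ les p r
  decseq : ∀ f : ℕ → P, (∀ n, le (f (n + 1)) (f n)) → ∃ p, ∀ n, les p (f n)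
  ext : ∀ p : P, ∃ x, tri x p
  mono : ∀ (x : X) (p q : P), tri x p → le p q → tri x q

/-- The `Δ`-expansion of a set of sequences in a metric space. -/
def expandSeq {X : Type*} [MetricSpace X] (Δ : ℕ → ℝ) (Y : Set (ℕ → X)) : Set (ℕ → X) :=
  {x | ∃ y ∈ Y, ∀ n, dist (x n) (y n) ≤ Δ n}

namespace ApproxGowersSpace

variable {P X : Type*} (G : ApproxGowersSpace P X)

def lap (q p : P) : Prop := G.le q p ∧ G.les p q

/-- Player I has a strategy in the asymptotic game `F_p` to reach `Y`. -/
def IStratF (p : P) (Y : Set (ℕ → X)) : Prop :=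
  ∃ σ : List X → P, (∀ s, G.lap (σ s) p) ∧
    ∀ x : ℕ → X, (∀ n, G.tri (x n) (σ (preSeq x n))) → x ∈ Y

/-- Player II has a strategy in Gowers' game `G_p` to reach `Y`. -/
def IIStratG (p : P) (Y : Set (ℕ → X)) : Prop :=
  ∃ τ : List P → X, ∀ f : ℕ → P, (∀ n, G.le (f n) p) →
    (∀ n, G.tri (gOut τ f n) (f n)) ∧ gOut τ f ∈ Y

def advI (σ : P → List (X × P) → X × P) (p0 : P) (g : ℕ → X × P) (n : ℕ) : X × P :=
  σ p0 ((List.range n).map g)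

def advIIps (p0 : P) (g : ℕ → X × P) : ℕ → P :=
  fun n => Nat.rec (motive := fun _ => P) p0 (fun k _ => (g k).2) n

def advIOut (σ : P → List (X × P) → X × P) (p0 : P) (g : ℕ → X × P) : ℕ → X :=
  itl (fun n => (advI σ p0 g n).1) (fun n => (g n).1)

/-- Player I has a strategy in the game `A_p` to reach `Y`. -/
def IStratA (p : P) (Y : Set (ℕ → X)) : Prop :=
  ∃ σ : P → List (X × P) → X × P,
    (∀ p0 g n, G.tri (advI σ p0 g n).1 (advIIps p0 g n) ∧ G.lap (advI σ p0 g n).2 p) ∧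
    ∀ p0 g, (∀ n, G.le (advIIps p0 g n) p) →
      (∀ n, G.tri (g n).1 ((advI σ p0 g n).2)) →
      advIOut σ p0 g ∈ Y

def advII (τ : List (X × P) → X × P) (h : ℕ → X × P) (n : ℕ) : X × P :=
  τ ((List.range (n + 1)).map h)

def advIIpsB (p0 : P) (τ : List (X × P) → X × P) (h : ℕ → X × P) : ℕ → P :=
  fun n => Nat.rec (motive := fun _ => P) p0 (fun k _ => (advII τ h k).2) n

def advIIOut (τ : List (X × P) → X × P) (h : ℕ → X × P) : ℕ → X :=
  itl (fun n => (h n).1) (fun n => (advII τ h n).1)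

/-- Player II has a strategy in the game `B_p` to reach `Y`. -/
def IIStratB (p : P) (Y : Set (ℕ → X)) : Prop :=
  ∃ (p0 : P) (τ : List (X × P) → X × P), G.lap p0 p ∧
    (∀ h n, G.tri (advII τ h n).1 ((h n).2) ∧ G.lap (advIIpsB p0 τ h (n + 1)) p) ∧
    ∀ h : ℕ → X × P,
      (∀ n, G.tri (h n).1 (advIIpsB p0 τ h n) ∧ G.le ((h n).2) p) →
      advIIOut τ h ∈ Y

/-- The (approximate) pigeonhole principle. -/
def Pigeonhole [MetricSpace X] : Prop :=
  ∀ (p : P) (A : Set X) (δ : ℝ), 0 < δ → ∃ q, G.le q p ∧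
    ((∀ x, G.tri x q → x ∉ A) ∨ ∀ x, G.tri x q → ∃ y ∈ A, dist x y ≤ δ)

/-- A set is strategically Ramsey (approximate version). -/
def StrategicallyRamsey [MetricSpace X] (Y : Set (ℕ → X)) : Prop :=
  ∀ (Δ : ℕ → ℝ), (∀ n, 0 < Δ n) → ∀ p : P, ∃ q, G.le q p ∧
    (G.IStratF q Yᶜ ∨ G.IIStratG q (expandSeq Δ Y))

end ApproxGowersSpace

/-! ## Approximate asymptotic spaces and systems of precompact sets -/

structure ApproxAsympSpace (P : Type*) (X : Type*) where
  lap : P → P → Prop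
  lap_refl : ∀ p, lap p p
  lap_trans : ∀ p q r, lap p q → lap q r → lap p r
  tri : X → P → Prop
  diag : ∀ p q r, lap q p → lap r p → ∃ u, lap u q ∧ lap u r
  ext : ∀ p : P, ∃ x, tri x p
  mono : ∀ (x : X) (p q : P), tri x p → lap p q → tri x q

namespace ApproxAsympSpace

variable {P X : Type*} (A : ApproxAsympSpace P X)

/-- `K ◁ p` for a set `K`: the points of `K` related to `p` are dense in `K`. -/
def denseIn [MetricSpace X] (K : Set X) (p : P) : Prop :=
  K ⊆ closure {x | x ∈ K ∧ A.tri x p}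

/-- Player I has a strategy in the asymptotic game `F_p` to reach `Y`. -/
def IStratF (p : P) (Y : Set (ℕ → X)) : Prop :=
  ∃ σ : List X → P, (∀ s, A.lap (σ s) p) ∧
    ∀ x : ℕ → X, (∀ n, A.tri (x n) (σ (preSeq x n))) → x ∈ Y

/-- Player I has a strategy in the strong asymptotic game `SF_p` (where II plays sets in `𝒦`)
to build a sequence satisfying `Φ`. -/
def IStratSF [MetricSpace X] (𝒦 : Set (Set X)) (p : P) (Φ : (ℕ → Set X) → Prop) : Prop :=
  ∃ σ : List (Set X) → P, (∀ s, A.lap (σ s) p) ∧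
    ∀ Ks : ℕ → Set X, (∀ n, Ks n ∈ 𝒦 ∧ A.denseIn (Ks n) (σ (preSeq Ks n))) → Φ Ks

end ApproxAsympSpace

/-- A system of precompact sets for an approximate asymptotic space. -/
structure PrecompactSystem {P X : Type*} [MetricSpace X] (A : ApproxAsympSpace P X) where
  mem : Set (Set X)
  precompact : ∀ K ∈ mem, IsCompact (closure K)
  op : Set X → Set X → Set X
  op_mem : ∀ K ∈ mem, ∀ L ∈ mem, op K L ∈ mem
  op_assoc : ∀ K ∈ mem, ∀ L ∈ mem, ∀ M ∈ mem, op (op K L) M = op K (op L M)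
  compat : ∀ (p : P), ∀ K ∈ mem, ∀ L ∈ mem,
    A.denseIn K p → A.denseIn L p → A.denseIn (op K L) p

/-- `⊕_{n ∈ A} K n`, for a finite nonempty set `A` of integers (taken in increasing order). -/
def sysSum {X : Type*} (op : Set X → Set X → Set X) (K : ℕ → Set X) (A : Finset ℕ) : Set X :=
  match A.sort (· ≤ ·) with
  | [] => ∅
  | a :: t => t.foldl (fun S n => op S (K n)) (K a)

/-- Block sequences of a sequence `(K_n)` of sets, relative to the operation `op`. -/
def IsBlockSeqOf {X : Type*} (op : Set X → Set X → Set X) (K : ℕ → Set X) (x : ℕ → X) : Prop :=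
  ∃ A : ℕ → Finset ℕ, (∀ i, (A i).Nonempty) ∧
    (∀ i, ∀ m ∈ A i, ∀ m' ∈ A (i + 1), m < m') ∧
    ∀ i, x i ∈ sysSum op K (A i)

/-- The approximate asymptotic space underlying an approximate Gowers space. -/
def ApproxGowersSpace.toAsymp {P X : Type*} (G : ApproxGowersSpace P X) :
    ApproxAsympSpace P X where
  lap := G.lap
  lap_refl := fun p => ⟨G.le_refl p, G.les_refl p⟩
  lap_trans := fun p q r h1 h2 => ⟨G.le_trans _ _ _ h1.1 h2.1, G.les_trans _ _ _ h2.2 h1.2⟩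
  tri := G.tri
  diag := fun p q r hq hr => by
    obtain ⟨u, hu1, hu2, hu3⟩ :=
      G.diag q r (G.les_trans _ _ _ (G.le_imp_les _ _ hq.1) hr.2)
    exact ⟨u, ⟨hu1, hu3⟩,
      ⟨hu2, G.les_trans _ _ _ (G.les_trans _ _ _ (G.le_imp_les _ _ hr.1) hq.2) hu3⟩⟩
  ext := G.ext
  mono := fun x p q h hpq => G.mono x p q h hpq.1

namespace Stmt15Aux

variable {P X : Type} [MetricSpace X]

open Classical in
/-- The next move of player I in the simulated Gowers game, given the simulated position `s`
and the (index of the) discretization `d` of player II's answer in the asymptotic game. -/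
noncomputable def gstep (G : ApproxGowersSpace P X) (τ : List P → X) (p : P) (ε : ℕ → ℝ)
    (useq : ℕ → X) (s : List P) (d : ℕ) : P :=
  if h : ∃ v, G.le v p ∧ dist (useq d) (τ (s ++ [v])) ≤ 2 * ε s.length then h.choose else p

theorem gstep_le (G : ApproxGowersSpace P X) (τ : List P → X) (p : P) (ε : ℕ → ℝ)
    (useq : ℕ → X) (s : List P) (d : ℕ) : G.le (gstep G τ p ε useq s d) p := by
  unfold gstep
  split
  next h => exact h.choose_spec.1
  next _ => exact G.le_refl p

/-- The simulated position in the Gowers game after discretized history `t`. -/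
noncomputable def bigA (G : ApproxGowersSpace P X) (τ : List P → X) (p : P) (ε : ℕ → ℝ)
    (useq : ℕ → X) (t : List ℕ) : List P :=
  t.foldl (fun s d => s ++ [gstep G τ p ε useq s d]) []

theorem foldl_len (G : ApproxGowersSpace P X) (τ : List P → X) (p : P) (ε : ℕ → ℝ)
    (useq : ℕ → X) :
    ∀ (t : List ℕ) (s : List P),
      (t.foldl (fun s d => s ++ [gstep G τ p ε useq s d]) s).length = s.length + t.length := by
  intro t
  induction t with
  | nil => intro s; simp
  | cons d t ih =>
      intro s
      rw [List.foldl_cons, ih]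
      simp
      omega

theorem bigA_length (G : ApproxGowersSpace P X) (τ : List P → X) (p : P) (ε : ℕ → ℝ)
    (useq : ℕ → X) (t : List ℕ) : (bigA G τ p ε useq t).length = t.length := by
  simpa [bigA] using foldl_len G τ p ε useq t []

theorem bigA_concat (G : ApproxGowersSpace P X) (τ : List P → X) (p : P) (ε : ℕ → ℝ)
    (useq : ℕ → X) (t : List ℕ) (d : ℕ) :
    bigA G τ p ε useq (t ++ [d]) =
      bigA G τ p ε useq t ++ [gstep G τ p ε useq (bigA G τ p ε useq t) d] := by
  simp [bigA, List.foldl_append]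

theorem foldl_mem_le (G : ApproxGowersSpace P X) (τ : List P → X) (p : P) (ε : ℕ → ℝ)
    (useq : ℕ → X) :
    ∀ (t : List ℕ) (s : List P), (∀ b ∈ s, G.le b p) →
      ∀ a ∈ t.foldl (fun s d => s ++ [gstep G τ p ε useq s d]) s, G.le a p := by
  intro t
  induction t with
  | nil => intro s hs; simpa using hs
  | cons d t ih =>
      intro s hs a ha
      rw [List.foldl_cons] at ha
      refine ih _ ?_ a ha
      intro b hb
      rcases List.mem_append.1 hb with hb | hb
      · exact hs b hb
      · simp only [List.mem_singleton] at hb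
        subst hb
        exact gstep_le G τ p ε useq s d

theorem bigA_mem_le (G : ApproxGowersSpace P X) (τ : List P → X) (p : P) (ε : ℕ → ℝ)
    (useq : ℕ → X) (t : List ℕ) : ∀ a ∈ bigA G τ p ε useq t, G.le a p :=
  foldl_mem_le G τ p ε useq t [] (by simp)

end Stmt15Aux

theorem stmt15 {P X : Type} [Nonempty P] [MetricSpace X] [Nonempty X] [PolishSpace X]
    (G : ApproxGowersSpace P X) (hPH : G.Pigeonhole)
    (𝒳 : Set (ℕ → X)) (p : P) (Δ : ℕ → ℝ) (hΔ : ∀ n, 0 < Δ n)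
    (h : G.IIStratG p 𝒳) :
    ∃ q, G.le q p ∧ G.IStratF q (expandSeq Δ 𝒳) := by
  classical
  obtain ⟨τ, hτ⟩ := h
  set ε : ℕ → ℝ := fun n => Δ n / 3 with hεdef
  have hεpos : ∀ n, 0 < ε n := fun n => by
    have := hΔ n; simp only [hεdef]; linarith
  obtain ⟨xdef⟩ := (inferInstance : Nonempty X)
  -- dense sequence
  have hds := TopologicalSpace.denseRange_denseSeq X
  set useq : ℕ → X := TopologicalSpace.denseSeq X with huseq
  have hdisc0 : ∀ (n : ℕ) (x : X), ∃ k, dist x (useq k) ≤ ε n := by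
    intro n x
    obtain ⟨k, hk⟩ := hds.exists_dist_lt x (hεpos n)
    exact ⟨k, hk.le⟩
  choose disc hdisc using hdisc0
  set A : List ℕ → List P := Stmt15Aux.bigA G τ p ε useq with hA
  have hAlen : ∀ t, (A t).length = t.length := fun t => Stmt15Aux.bigA_length G τ p ε useq t
  have hAmem : ∀ t, ∀ a ∈ A t, G.le a p := fun t => Stmt15Aux.bigA_mem_le G τ p ε useq t
  set Hand : List ℕ → P → Prop := fun t r =>
    ∀ x, G.tri x r → ∃ v, G.le v p ∧ dist x (τ (A t ++ [v])) ≤ ε t.length with hHand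
  -- the handler: below any condition there is one all whose points are close to a τ-answer
  have hstep : ∀ (t : List ℕ) (q' : P), G.le q' p → ∃ r, G.le r q' ∧ Hand t r := by
    intro t q' hq'
    obtain ⟨r, hr, hcase⟩ :=
      hPH q' {y | ∃ v, G.le v p ∧ y = τ (A t ++ [v])} (ε t.length) (hεpos _)
    refine ⟨r, hr, ?_⟩
    rcases hcase with hcase | hcase
    · exfalso
      have hrp : G.le r p := G.le_trans _ _ _ hr hq'
      set f : ℕ → P := fun i => if i < t.length then (A t).getD i p else r with hf
      have hfle : ∀ i, G.le (f i) p := by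
        intro i
        by_cases hi : i < t.length
        · have hi' : i < (A t).length := by rw [hAlen]; exact hi
          simp only [hf, if_pos hi]
          rw [List.getD_eq_getElem _ _ hi']
          exact hAmem t _ (List.getElem_mem hi')
        · simp only [hf, if_neg hi]
          exact hrp
      have hmap : (List.range (t.length + 1)).map f = A t ++ [r] := by
        apply List.ext_getElem
        · simp [hAlen]
        · intro i h1 h2
          simp only [List.getElem_map, List.getElem_range]
          by_cases hi : i < t.length
          · have hi' : i < (A t).length := by rw [hAlen]; exact hi
            rw [List.getElem_append_left hi']
            simp only [hf, if_pos hi]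
            rw [List.getD_eq_getElem _ _ hi']
          · have hieq : i = t.length := by
              simp only [List.length_map, List.length_range] at h1; omega
            have hi'' : ¬ i < (A t).length := by rw [hAlen]; omega
            rw [List.getElem_append_right (by omega : (A t).length ≤ i)]
            simp only [hf, if_neg hi]
            simp [hAlen, hieq]
      have h1 := (hτ f hfle).1 t.length
      have hout : gOut τ f t.length = τ (A t ++ [r]) := by
        simp only [gOut, hmap]
      have hfeq : f t.length = r := by simp [hf]
      rw [hout, hfeq] at h1
      exact hcase _ h1 ⟨r, hrp, rfl⟩
    · intro x hx
      obtain ⟨y, ⟨v, hv, rfl⟩, hd⟩ := hcase x hx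
      exact ⟨v, hv, hd⟩
  -- fusion along an enumeration of all discretized histories
  have hstep' : ∀ (k : ℕ) (q' : {r : P // G.le r p}),
      ∃ r : {r : P // G.le r p}, G.le r.1 q'.1 ∧
        Hand ((Encodable.decode (α := List ℕ) k).getD []) r.1 := by
    intro k q'
    obtain ⟨r, h1, h2⟩ := hstep _ q'.1 q'.2
    exact ⟨⟨r, G.le_trans _ _ _ h1 q'.2⟩, h1, h2⟩
  choose nxt hnxt1 hnxt2 using hstep'
  set Qs : ℕ → {r : P // G.le r p} := fun k => Nat.rec ⟨p, G.le_refl p⟩ nxt k with hQs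
  have hQsucc : ∀ k, Qs (k + 1) = nxt k (Qs k) := fun k => rfl
  obtain ⟨qstar, hqstar⟩ := G.decseq (fun k => (Qs k).1) (fun k => hnxt1 k (Qs k))
  have hq0 : G.les qstar p := hqstar 0
  obtain ⟨q, hq1, hq2, hq3⟩ := G.diag qstar p hq0
  -- the moves of player I in the asymptotic game
  have hmove : ∀ t : List ℕ, ∃ r, G.lap r q ∧ G.le r (Qs (Encodable.encode t + 1)).1 := by
    intro t
    have h1 : G.les q (Qs (Encodable.encode t + 1)).1 :=
      G.les_trans q qstar _ (G.le_imp_les _ _ hq1) (hqstar (Encodable.encode t + 1))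
    obtain ⟨r, hr1, hr2, hr3⟩ := G.diag q _ h1
    exact ⟨r, ⟨hr1, hr3⟩, hr2⟩
  choose R hR1 hR2 using hmove
  set discIdx : List X → List ℕ :=
    fun xs => (List.range xs.length).map (fun i => disc i (xs.getD i xdef)) with hdiscIdx
  refine ⟨q, hq2, fun xs => R (discIdx xs), fun xs => hR1 _, ?_⟩
  intro x hx
  set ti : ℕ → ℕ := fun n => disc n (x n) with hti
  set T : ℕ → List ℕ := fun n => (List.range n).map ti with hT
  have hTlen : ∀ n, (T n).length = n := by intro n; simp [hT]
  have hdI : ∀ n, discIdx (preSeq x n) = T n := by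
    intro n
    simp only [hdiscIdx, hT, preSeq, List.length_map, List.length_range]
    apply List.ext_getElem
    · simp
    · intro i h1 h2
      simp only [List.getElem_map, List.getElem_range, hti]
      congr 1
      have hi : i < n := by simpa using h1
      rw [List.getD_eq_getElem _ _ (by simpa using hi)]
      simp
  have hTsucc : ∀ n, T (n + 1) = T n ++ [ti n] := by
    intro n; simp [hT, List.range_succ]
  set f : ℕ → P := fun n => Stmt15Aux.gstep G τ p ε useq (A (T n)) (ti n) with hfdef
  have hASucc : ∀ n, A (T (n + 1)) = A (T n) ++ [f n] := by
    intro n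
    rw [hTsucc n]
    exact Stmt15Aux.bigA_concat G τ p ε useq (T n) (ti n)
  have hmapf : ∀ n, (List.range (n + 1)).map f = A (T (n + 1)) := by
    intro n
    induction n with
    | zero =>
        rw [hASucc 0]
        have : A (T 0) = [] := rfl
        simp [this, List.range_succ]
    | succ m ih =>
        rw [hASucc (m + 1), ← ih, List.range_succ, List.map_append]
        simp
  have key : ∀ n, dist (x n) (τ (A (T (n + 1)))) ≤ Δ n := by
    intro n
    have hxn : G.tri (x n) (R (T n)) := by
      simpa only [hdI n] using hx n
    have hxq : G.tri (x n) (Qs (Encodable.encode (T n) + 1)).1 :=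
      G.mono _ _ _ hxn (hR2 _)
    have hhand := hnxt2 (Encodable.encode (T n)) (Qs (Encodable.encode (T n)))
    rw [← hQsucc] at hhand
    have hdec : ((Encodable.decode (α := List ℕ) (Encodable.encode (T n))).getD []) = T n := by
      rw [Encodable.encodek]; rfl
    rw [hdec] at hhand
    obtain ⟨v, hv1, hv2⟩ := hhand (x n) hxq
    rw [hTlen n] at hv2
    have hd1 : dist (x n) (useq (ti n)) ≤ ε n := hdisc n (x n)
    have hex : ∃ w, G.le w p ∧
        dist (useq (ti n)) (τ (A (T n) ++ [w])) ≤ 2 * ε (A (T n)).length := by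
      refine ⟨v, hv1, ?_⟩
      rw [hAlen, hTlen]
      calc dist (useq (ti n)) (τ (A (T n) ++ [v]))
          ≤ dist (useq (ti n)) (x n) + dist (x n) (τ (A (T n) ++ [v])) := dist_triangle _ _ _
        _ ≤ ε n + ε n := by rw [dist_comm]; exact add_le_add hd1 hv2
        _ = 2 * ε n := by ring
    have hfn : f n = hex.choose := by
      simp only [hfdef, Stmt15Aux.gstep, hA]
      rw [dif_pos hex]
    have hspec := hex.choose_spec
    rw [← hfn] at hspec
    have hspec2 : dist (useq (ti n)) (τ (A (T n) ++ [f n])) ≤ 2 * ε n := by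
      have := hspec.2
      rwa [hAlen, hTlen] at this
    calc dist (x n) (τ (A (T (n + 1))))
        = dist (x n) (τ (A (T n) ++ [f n])) := by rw [hASucc n]
      _ ≤ dist (x n) (useq (ti n)) + dist (useq (ti n)) (τ (A (T n) ++ [f n])) :=
          dist_triangle _ _ _
      _ ≤ ε n + 2 * ε n := add_le_add hd1 hspec2
      _ = Δ n := by simp only [hεdef]; ring
  have hfle : ∀ n, G.le (f n) p := fun n => Stmt15Aux.gstep_le G τ p ε useq _ _
  obtain ⟨htri, hmem⟩ := hτ f hfle
  refine ⟨gOut τ f, hmem, fun n => ?_⟩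
  have hout : gOut τ f n = τ (A (T (n + 1))) := by
    simp only [gOut, hmapf n]
  rw [hout]
  exact key n
end

section
/- Let G = (P, X, d, ≤, ≤*, ◁) be an approximate Gowers space satisfying the pigeonhole principle, and let 𝒳 ⊆ X^ω be a strategically Ramsey set. Then for every p ∈ P and every sequence Δ = (Δ_n) of positive reals, there exists q ≤ p such that in the asymptotic game F_q, player I either has a strategy to reach the complement of 𝒳, or has a strategy to reach (𝒳)_Δ. -/
open MeasureTheory Filter Topology TopologicalSpace

/-! ## Auxiliary material for the proof of `stmt16` -/

section Aux

open Classical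

variable {P X : Type} [MetricSpace X]

/-- The next "virtual" condition played against II's strategy `τ`. -/
noncomputable def auxStep (G : ApproxGowersSpace P X) (τ : List P → X) (q₀ : P) (δ : ℝ)
    (L : List P) (d : X) : P :=
  if h : ∃ r, G.le r q₀ ∧ dist (τ (L ++ [r])) d ≤ δ then h.choose else q₀

theorem auxStep_le (G : ApproxGowersSpace P X) (τ : List P → X) (q₀ : P) (δ : ℝ)
    (L : List P) (d : X) : G.le (auxStep G τ q₀ δ L d) q₀ := by
  unfold auxStep
  split
  next h => exact h.choose_spec.1
  next => exact G.le_refl q₀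

theorem auxStep_dist (G : ApproxGowersSpace P X) (τ : List P → X) (q₀ : P) (δ : ℝ)
    (L : List P) (d : X) (h : ∃ r, G.le r q₀ ∧ dist (τ (L ++ [r])) d ≤ δ) :
    dist (τ (L ++ [auxStep G τ q₀ δ L d])) d ≤ δ := by
  unfold auxStep
  rw [dif_pos h]
  exact h.choose_spec.2

/-- The list of virtual conditions corresponding to a (reversed) history. -/
noncomputable def auxFr (G : ApproxGowersSpace P X) (τ : List P → X) (q₀ : P) (Δ : ℕ → ℝ) :
    List X → List P
  | [] => []
  | d :: t =>
      auxFr G τ q₀ Δ t ++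
        [auxStep G τ q₀ (Δ t.length / 4 + Δ t.length / 8) (auxFr G τ q₀ Δ t) d]

/-- The list of virtual conditions corresponding to a history. -/
noncomputable def auxFv (G : ApproxGowersSpace P X) (τ : List P → X) (q₀ : P) (Δ : ℕ → ℝ)
    (t : List X) : List P := auxFr G τ q₀ Δ t.reverse

theorem auxFv_nil (G : ApproxGowersSpace P X) (τ : List P → X) (q₀ : P) (Δ : ℕ → ℝ) :
    auxFv G τ q₀ Δ [] = [] := rfl

theorem auxFv_concat (G : ApproxGowersSpace P X) (τ : List P → X) (q₀ : P) (Δ : ℕ → ℝ)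
    (t : List X) (d : X) :
    auxFv G τ q₀ Δ (t ++ [d]) =
      auxFv G τ q₀ Δ t ++
        [auxStep G τ q₀ (Δ t.length / 4 + Δ t.length / 8) (auxFv G τ q₀ Δ t) d] := by
  simp [auxFv, auxFr]

theorem auxFr_mem_le (G : ApproxGowersSpace P X) (τ : List P → X) (q₀ : P) (Δ : ℕ → ℝ) :
    ∀ (t : List X) (r : P), r ∈ auxFr G τ q₀ Δ t → G.le r q₀ := by
  intro t
  induction t with
  | nil => intro r hr; simp [auxFr] at hr
  | cons d t ih =>
      intro r hr
      simp only [auxFr, List.mem_append, List.mem_singleton] at hr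
      rcases hr with hr | hr
      · exact ih r hr
      · subst hr; exact auxStep_le G τ q₀ _ _ _

theorem auxFv_mem_le (G : ApproxGowersSpace P X) (τ : List P → X) (q₀ : P) (Δ : ℕ → ℝ)
    (t : List X) (r : P) (hr : r ∈ auxFv G τ q₀ Δ t) : G.le r q₀ :=
  auxFr_mem_le G τ q₀ Δ t.reverse r hr

/-- A condition `u` is good for the node `t` if every point related to `u` is close to
some answer of II's strategy `τ` after the virtual history determined by `t`. -/
def auxGood (G : ApproxGowersSpace P X) (τ : List P → X) (q₀ : P) (Δ : ℕ → ℝ)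
    (u : P) (t : List X) : Prop :=
  ∀ x, G.tri x u → ∃ r, G.le r q₀ ∧
    dist x (τ (auxFv G τ q₀ Δ t ++ [r])) ≤ Δ t.length / 4

theorem list_getD_range (M : List P) (q₀ : P) :
    (List.range M.length).map (fun n => M.getD n q₀) = M := by
  apply List.ext_getElem
  · simp
  · intro i h1 h2
    simp only [List.getElem_map, List.getElem_range]
    rw [List.getD_eq_getElem M q₀ h2]

theorem auxDense (G : ApproxGowersSpace P X) (hPH : G.Pigeonhole) (τ : List P → X) (q₀ : P)
    (Δ : ℕ → ℝ) (hΔ : ∀ n, 0 < Δ n)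
    (hτ : ∀ f : ℕ → P, (∀ n, G.le (f n) q₀) → ∀ n, G.tri (gOut τ f n) (f n))
    (v : P) (hv : G.le v q₀) (t : List X) :
    ∃ u, G.le u v ∧ auxGood G τ q₀ Δ u t := by
  set L := auxFv G τ q₀ Δ t with hL
  set A : Set X := {x | ∃ r, G.le r q₀ ∧ x = τ (L ++ [r])} with hA
  obtain ⟨u, huv, halt⟩ := hPH v A (Δ t.length / 4) (by have := hΔ t.length; linarith)
  rcases halt with halt | halt
  · exfalso
    have huq₀ : G.le u q₀ := G.le_trans _ _ _ huv hv
    set M : List P := L ++ [u] with hM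
    set f : ℕ → P := fun n => M.getD n q₀ with hf
    have hfle : ∀ n, G.le (f n) q₀ := by
      intro n
      by_cases hn : n < M.length
      · rw [hf]
        simp only
        rw [List.getD_eq_getElem M q₀ hn]
        have hmem : M[n] ∈ M := List.getElem_mem hn
        rcases List.mem_append.1 hmem with h | h
        · exact auxFv_mem_le G τ q₀ Δ t _ h
        · rw [List.mem_singleton] at h; rw [h]; exact huq₀
      · rw [hf]
        simp only
        rw [List.getD_eq_default M q₀ (by omega)]
        exact G.le_refl q₀
    have hlist : (List.range (L.length + 1)).map f = M := by
      have : L.length + 1 = M.length := by simp [hM]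
      rw [this, hf]
      exact list_getD_range M q₀
    have htri := hτ f hfle L.length
    have hfm : f L.length = u := by
      rw [hf]
      simp only
      rw [hM, List.getD_eq_getElem (L ++ [u]) q₀ (by simp), List.getElem_concat_length]
      rfl
    simp only [gOut] at htri
    rw [hlist, hfm] at htri
    exact halt _ htri ⟨u, huq₀, rfl⟩
  · refine ⟨u, huv, ?_⟩
    intro x hx
    obtain ⟨y, hy, hd⟩ := halt x hx
    obtain ⟨r, hr, rfl⟩ := hy
    exact ⟨r, hr, hd⟩

theorem preSeq_succ {Y : Type*} (x : ℕ → Y) (k : ℕ) :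
    preSeq x (k + 1) = preSeq x k ++ [x k] := by
  simp [preSeq, List.range_succ]

theorem preSeq_length {Y : Type*} (x : ℕ → Y) (k : ℕ) : (preSeq x k).length = k := by
  simp [preSeq]

theorem auxKey {P X : Type} [Nonempty P] [MetricSpace X] [Nonempty X] [PolishSpace X]
    (G : ApproxGowersSpace P X) (hPH : G.Pigeonhole) (Y : Set (ℕ → X))
    (Δ : ℕ → ℝ) (hΔ : ∀ n, 0 < Δ n) (q₀ : P) (h : G.IIStratG q₀ Y) :
    ∃ q, G.le q q₀ ∧ G.IStratF q (expandSeq Δ Y) := by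
  classical
  obtain ⟨τ, hτ⟩ := h
  have hτ1 : ∀ f : ℕ → P, (∀ n, G.le (f n) q₀) → ∀ n, G.tri (gOut τ f n) (f n) :=
    fun f hf => (hτ f hf).1
  have hτ2 : ∀ f : ℕ → P, (∀ n, G.le (f n) q₀) → gOut τ f ∈ Y :=
    fun f hf => (hτ f hf).2
  obtain ⟨s, hsc, hsd⟩ := TopologicalSpace.exists_countable_dense X
  haveI := hsc.to_subtype
  obtain ⟨e, he⟩ := exists_surjective_nat (List ↥s)
  have hc : ∀ (n : ℕ) (x : X), ∃ d : ↥s, dist x (d : X) < Δ n / 8 := by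
    intro n x
    obtain ⟨b, hb, hdb⟩ := Metric.mem_closure_iff.1 (hsd x) (Δ n / 8)
      (by have := hΔ n; linarith)
    exact ⟨⟨b, hb⟩, hdb⟩
  choose c hcd using hc
  set node : ℕ → List X := fun n => (e n).map Subtype.val with hnode
  have dens := auxDense G hPH τ q₀ Δ hΔ hτ1
  set st : ℕ → P → P := fun n w => if hw : G.le w q₀ then (dens w hw (node n)).choose else q₀
    with hstdef
  set v : ℕ → P := fun n => Nat.rec (st 0 q₀) (fun k prev => st (k + 1) prev) n with hvdef
  have hst : ∀ (n : ℕ) (w : P) (hw : G.le w q₀),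
      G.le (st n w) w ∧ G.le (st n w) q₀ ∧ auxGood G τ q₀ Δ (st n w) (node n) := by
    intro n w hw
    have : st n w = (dens w hw (node n)).choose := dif_pos hw
    rw [this]
    obtain ⟨h1, h2⟩ := (dens w hw (node n)).choose_spec
    exact ⟨h1, G.le_trans _ _ _ h1 hw, h2⟩
  have hv : ∀ n, G.le (v n) q₀ ∧ auxGood G τ q₀ Δ (v n) (node n) := by
    intro n
    induction n with
    | zero =>
        have := hst 0 q₀ (G.le_refl q₀)
        exact ⟨this.2.1, this.2.2⟩
    | succ k ih =>
        have := hst (k + 1) (v k) ih.1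
        exact ⟨this.2.1, this.2.2⟩
  have hvdec : ∀ n, G.le (v (n + 1)) (v n) := fun n => (hst (n + 1) (v n) (hv n).1).1
  obtain ⟨qs, hqs⟩ := G.decseq v hvdec
  obtain ⟨Q, hQqs, hQv0, _⟩ := G.diag qs (v 0) (hqs 0)
  have hQq₀ : G.le Q q₀ := G.le_trans _ _ _ hQv0 (hv 0).1
  have hm : ∀ n, ∃ m, G.lap m Q ∧ auxGood G τ q₀ Δ m (node n) := by
    intro n
    have h1 : G.les Q (v n) := G.les_trans _ _ _ (G.le_imp_les _ _ hQqs) (hqs n)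
    obtain ⟨m, h2, h3, h4⟩ := G.diag Q (v n) h1
    refine ⟨m, ⟨h2, h4⟩, ?_⟩
    intro x hx
    exact (hv n).2 x (G.mono x m (v n) hx h3)
  choose mv hmv using hm
  haveI : Inhabited X := Classical.inhabited_of_nonempty ‹_›
  set idx : List X → ℕ := fun ss =>
    (he ((List.range ss.length).map (fun i => c i (ss.getD i default)))).choose with hidx
  have hidxspec : ∀ ss : List X,
      e (idx ss) = (List.range ss.length).map (fun i => c i (ss.getD i default)) :=
    fun ss => (he _).choose_spec
  refine ⟨Q, hQq₀, fun ss => mv (idx ss), fun ss => (hmv (idx ss)).1, ?_⟩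
  intro x hx
  set d : ℕ → X := fun i => (c i (x i) : X) with hd
  have hnodek : ∀ k, node (idx (preSeq x k)) = preSeq d k := by
    intro k
    rw [hnode]
    simp only
    rw [hidxspec (preSeq x k), preSeq_length]
    rw [List.map_map]
    apply List.map_congr_left
    intro i hi
    rw [List.mem_range] at hi
    have hgd : (preSeq x k).getD i default = x i := by
      rw [preSeq, List.getD_eq_getElem _ _ (by simpa using hi)]
      simp
    show ((c i ((preSeq x k).getD i default) : X)) = d i
    rw [hgd]
  set g : ℕ → P := fun k =>
    auxStep G τ q₀ (Δ k / 4 + Δ k / 8) (auxFv G τ q₀ Δ (preSeq d k)) (d k) with hg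
  have hgdef : ∀ k, g k = auxStep G τ q₀ (Δ k / 4 + Δ k / 8)
      (auxFv G τ q₀ Δ (preSeq d k)) (d k) := fun k => rfl
  have hFv : ∀ k, auxFv G τ q₀ Δ (preSeq d k) = preSeq g k := by
    intro k
    induction k with
    | zero => simp [preSeq, auxFv_nil]
    | succ k ih =>
        rw [preSeq_succ d k, auxFv_concat, preSeq_length, preSeq_succ g k, hgdef k, ih]
  have hgle : ∀ k, G.le (g k) q₀ := fun k => auxStep_le G τ q₀ _ _ _
  have hdist : ∀ k, dist (x k) (τ (preSeq g (k + 1))) ≤ Δ k := by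
    intro k
    have hgood := (hmv (idx (preSeq x k))).2
    rw [hnodek k] at hgood
    obtain ⟨r, hr, hdr⟩ := hgood (x k) (hx k)
    rw [preSeq_length] at hdr
    have hdk : dist (x k) (d k) < Δ k / 8 := hcd k (x k)
    have hex : ∃ r', G.le r' q₀ ∧
        dist (τ (auxFv G τ q₀ Δ (preSeq d k) ++ [r'])) (d k) ≤ Δ k / 4 + Δ k / 8 := by
      refine ⟨r, hr, ?_⟩
      calc dist (τ (auxFv G τ q₀ Δ (preSeq d k) ++ [r])) (d k)
          ≤ dist (τ (auxFv G τ q₀ Δ (preSeq d k) ++ [r])) (x k) + dist (x k) (d k) :=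
            dist_triangle _ _ _
        _ ≤ Δ k / 4 + Δ k / 8 := by rw [dist_comm]; exact add_le_add hdr hdk.le
    have hstep := auxStep_dist G τ q₀ (Δ k / 4 + Δ k / 8) (auxFv G τ q₀ Δ (preSeq d k)) (d k) hex
    have heq : auxFv G τ q₀ Δ (preSeq d k) ++
        [auxStep G τ q₀ (Δ k / 4 + Δ k / 8) (auxFv G τ q₀ Δ (preSeq d k)) (d k)] =
        preSeq g (k + 1) := by
      rw [preSeq_succ g k, hgdef k, hFv k]
    rw [heq] at hstep
    calc dist (x k) (τ (preSeq g (k + 1)))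
        ≤ dist (x k) (d k) + dist (d k) (τ (preSeq g (k + 1))) := dist_triangle _ _ _
      _ ≤ Δ k / 8 + (Δ k / 4 + Δ k / 8) := by
          rw [dist_comm (d k)]; exact add_le_add hdk.le hstep
      _ ≤ Δ k := by have := hΔ k; linarith
  refine ⟨gOut τ g, hτ2 g hgle, fun n => hdist n⟩

end Aux

theorem stmt16 {P X : Type} [Nonempty P] [MetricSpace X] [Nonempty X] [PolishSpace X]
    (G : ApproxGowersSpace P X) (hPH : G.Pigeonhole)
    (𝒳 : Set (ℕ → X)) (hSR : G.StrategicallyRamsey 𝒳)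
    (p : P) (Δ : ℕ → ℝ) (hΔ : ∀ n, 0 < Δ n) :
    ∃ q, G.le q p ∧ (G.IStratF q 𝒳ᶜ ∨ G.IStratF q (expandSeq Δ 𝒳)) := by
  have hΔ2 : ∀ n, 0 < Δ n / 2 := fun n => by have := hΔ n; linarith
  obtain ⟨q₀, hq₀p, hcase⟩ := hSR (fun n => Δ n / 2) hΔ2 p
  rcases hcase with h | h
  · exact ⟨q₀, hq₀p, Or.inl h⟩
  · obtain ⟨q, hq, σ, hσ1, hσ2⟩ :=
      auxKey G hPH (expandSeq (fun n => Δ n / 2) 𝒳) (fun n => Δ n / 2) hΔ2 q₀ h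
    refine ⟨q, G.le_trans _ _ _ hq hq₀p, Or.inr ⟨σ, hσ1, ?_⟩⟩
    intro x hx
    obtain ⟨y, ⟨z, hz, hyz⟩, hxy⟩ := hσ2 x hx
    refine ⟨z, hz, fun n => ?_⟩
    calc dist (x n) (z n) ≤ dist (x n) (y n) + dist (y n) (z n) := dist_triangle _ _ _
      _ ≤ Δ n / 2 + Δ n / 2 := add_le_add (hxy n) (hyz n)
      _ = Δ n := by ring
end
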